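/- arXiv:0810.3209 — 9 statements merged into one kernel-verified Lean document; each statement's English description precedes it below -/
import Mathlib

section
/- Let X be a finite set and 𝓘 a non-empty family of subsets of X such that for all A, B ∈ 𝓘, either A ∩ B ∈ 𝓘 or A ∪ B ∈ 𝓘. Then the Euler characteristic χ(𝓘) := ∑_{l≥1} ∑_{chains C₁ ⊊ ⋯ ⊊ C_l, all C_i ∈ 𝓘} (-1)^{l-1} equals 1. -/
open Finset
open scoped Classical


private lemma neg_one_pow_pred {n : ℕ} (h : n ≠ 0) : (-1 : ℤ) ^ (n - 1) = -(-1 : ℤ) ^ n := by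
  obtain ⟨m, rfl⟩ := Nat.exists_eq_succ_of_ne_zero h
  simp [pow_succ]

private lemma chain_exists_min {X : Type*} [DecidableEq X] (T : Finset (Finset X))
    (hne : T.Nonempty) (hch : ∀ a ∈ T, ∀ b ∈ T, a ⊆ b ∨ b ⊆ a) :
    ∃ C ∈ T, ∀ D ∈ T, C ⊆ D := by
  obtain ⟨C, hC, hmin⟩ := T.exists_minimal hne
  refine ⟨C, hC, fun D hD => ?_⟩
  rcases hch C hC D hD with h | h
  · exact h
  · rcases eq_or_ne D C with rfl | hne'
    · exact subset_rfl
    · exact hmin hD h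

/-- The Euler characteristic of a family `I` of subsets of a finite set:
the sum over all non-empty chains `C₁ ⊊ ⋯ ⊊ C_l` contained in `I` of `(-1)^(l-1)`.
A chain is identified with the (non-empty) subset `T ⊆ I` of its members, which is
totally ordered by inclusion; its length is `T.card`. -/
noncomputable def eulerChar {X : Type*} [Fintype X] [DecidableEq X]
    (I : Finset (Finset X)) : ℤ :=
  ∑ T ∈ I.powerset.filter
      (fun T => T.Nonempty ∧ ∀ a ∈ T, ∀ b ∈ T, a ⊆ b ∨ b ⊆ a),
    (-1 : ℤ) ^ (T.card - 1)

private lemma eulerChar_cone {X : Type*} [Fintype X] [DecidableEq X]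
    (I : Finset (Finset X)) (c : Finset X) (hc : c ∈ I)
    (hcomp : ∀ a ∈ I, a ⊆ c ∨ c ⊆ a) : eulerChar I = 1 := by
  classical
  set Ch := I.powerset.filter
      (fun T => T.Nonempty ∧ ∀ a ∈ T, ∀ b ∈ T, a ⊆ b ∨ b ⊆ a) with hCh
  have hmemCh : ∀ T : Finset (Finset X),
      T ∈ Ch ↔ T ⊆ I ∧ T.Nonempty ∧ ∀ a ∈ T, ∀ b ∈ T, a ⊆ b ∨ b ⊆ a := by
    intro T; simp [hCh]
  have hsingle : ({c} : Finset (Finset X)) ∈ Ch := by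
    rw [hmemCh]
    exact ⟨by simpa using hc, singleton_nonempty c, by simp⟩
  have gmem : ∀ T, T ∈ Ch.erase {c} →
      (if c ∈ T then T.erase c else insert c T) ∈ Ch.erase {c} := by
    intro T hT
    have hT' := (hmemCh T).mp (Finset.mem_of_mem_erase hT)
    have hTne : T ≠ {c} := Finset.ne_of_mem_erase hT
    by_cases hcT : c ∈ T
    · simp only [hcT, if_true]
      obtain ⟨d, hd, hdc⟩ : ∃ d ∈ T, d ≠ c := by
        by_contra h
        push_neg at h
        apply hTne
        apply Finset.Subset.antisymm
        · intro x hx; simp [h x hx]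
        · simp [hcT]
      refine Finset.mem_erase.mpr ⟨?_, (hmemCh _).mpr ⟨?_, ?_, ?_⟩⟩
      · intro h
        exact (Finset.notMem_erase c T) (h ▸ Finset.mem_singleton_self c)
      · exact (Finset.erase_subset c T).trans hT'.1
      · exact ⟨d, Finset.mem_erase.mpr ⟨hdc, hd⟩⟩
      · intro a ha b hb
        exact hT'.2.2 a (Finset.mem_of_mem_erase ha) b (Finset.mem_of_mem_erase hb)
    · simp only [hcT, if_false]
      refine Finset.mem_erase.mpr ⟨?_, (hmemCh _).mpr ⟨?_, ?_, ?_⟩⟩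
      · intro h
        obtain ⟨d, hd⟩ := hT'.2.1
        have : d ∈ ({c} : Finset (Finset X)) := h ▸ Finset.mem_insert_of_mem hd
        simp only [Finset.mem_singleton] at this
        exact hcT (this ▸ hd)
      · exact Finset.insert_subset hc hT'.1
      · exact ⟨c, Finset.mem_insert_self c T⟩
      · intro a ha b hb
        rcases Finset.mem_insert.mp ha with rfl | ha'
        · rcases Finset.mem_insert.mp hb with rfl | hb'
          · left; exact subset_rfl
          · exact (hcomp b (hT'.1 hb')).symm
        · rcases Finset.mem_insert.mp hb with rfl | hb'
          · exact hcomp a (hT'.1 ha')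
          · exact hT'.2.2 a ha' b hb'
  have key : ∑ T ∈ Ch.erase {c}, (-1 : ℤ) ^ (T.card - 1) = 0 := by
    refine Finset.sum_involution (fun T _ => if c ∈ T then T.erase c else insert c T)
      ?_ ?_ gmem ?_
    · -- sums to zero
      intro T hT
      have hT' := (hmemCh T).mp (Finset.mem_of_mem_erase hT)
      have hTne : T ≠ {c} := Finset.ne_of_mem_erase hT
      have h1 : 1 ≤ T.card := Finset.card_pos.mpr hT'.2.1
      by_cases hcT : c ∈ T
      · simp only [hcT, if_true]
        obtain ⟨d, hd, hdc⟩ : ∃ d ∈ T, d ≠ c := by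
          by_contra h
          push_neg at h
          apply hTne
          apply Finset.Subset.antisymm
          · intro x hx; simp [h x hx]
          · simp [hcT]
        have h2 : 2 ≤ T.card := Finset.one_lt_card.mpr ⟨d, hd, c, hcT, hdc⟩
        have hce : (T.erase c).card = T.card - 1 := Finset.card_erase_of_mem hcT
        have e1 : (-1 : ℤ) ^ (T.card - 1) = -(-1 : ℤ) ^ T.card :=
          neg_one_pow_pred (by omega)
        have e2 : (-1 : ℤ) ^ (T.card - 1 - 1) = -(-1 : ℤ) ^ (T.card - 1) :=
          neg_one_pow_pred (by omega)
        rw [hce, e2, e1]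
        ring
      · simp only [hcT, if_false]
        have hci : (insert c T).card = T.card + 1 := Finset.card_insert_of_notMem hcT
        rw [hci, show T.card + 1 - 1 = T.card from by omega,
          neg_one_pow_pred (by omega : T.card ≠ 0)]
        ring
    · -- g a ≠ a
      intro T hT _
      by_cases hcT : c ∈ T
      · simp only [hcT, if_true]
        intro h
        apply Finset.notMem_erase c T
        rw [h]; exact hcT
      · simp only [hcT, if_false]
        intro h
        exact hcT (h ▸ Finset.mem_insert_self c T)
    · -- involution
      intro T hT
      by_cases hcT : c ∈ T
      · have h1 : c ∉ T.erase c := Finset.notMem_erase c T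
        simp [hcT, h1, Finset.insert_erase hcT]
      · have h1 : c ∈ insert c T := Finset.mem_insert_self c T
        simp [hcT, h1, Finset.erase_insert hcT]
  have hadd := Finset.add_sum_erase Ch (fun T => (-1 : ℤ) ^ (T.card - 1)) hsingle
  unfold eulerChar
  rw [← hCh, ← hadd, key]
  simp

/-- If `I` is a non-empty family of subsets of a finite set `X` such that for all
`A, B ∈ I` either `A ∩ B ∈ I` or `A ∪ B ∈ I`, then `χ(I) = 1`. -/
theorem eulerChar_eq_one {X : Type*} [Fintype X] [DecidableEq X]
    (I : Finset (Finset X)) (hne : I.Nonempty)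
    (hclosed : ∀ A ∈ I, ∀ B ∈ I, A ∩ B ∈ I ∨ A ∪ B ∈ I) :
    eulerChar I = 1 := by
  classical
  suffices H : ∀ n (I : Finset (Finset X)), I.card ≤ n → I.Nonempty →
      (∀ A ∈ I, ∀ B ∈ I, A ∩ B ∈ I ∨ A ∪ B ∈ I) → eulerChar I = 1 by
    exact H I.card I le_rfl hne hclosed
  intro n
  induction n with
  | zero =>
    intro I hcard hne _
    rw [Finset.card_eq_zero.mp (Nat.le_zero.mp hcard)] at hne
    exact absurd hne (by simp)
  | succ n ih =>
    intro I hcard hne hcl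
    obtain ⟨M, hM, hMmax⟩ := I.exists_max_image Finset.card hne
    set Ch := I.powerset.filter
        (fun T => T.Nonempty ∧ ∀ a ∈ T, ∀ b ∈ T, a ⊆ b ∨ b ⊆ a) with hCh
    have hmemCh : ∀ T : Finset (Finset X),
        T ∈ Ch ↔ T ⊆ I ∧ T.Nonempty ∧ ∀ a ∈ T, ∀ b ∈ T, a ⊆ b ∨ b ⊆ a := by
      intro T; simp [hCh]
    -- first sum: chains entirely below M
    have hJfirst : ∑ T ∈ Ch.filter (fun T => ∀ D ∈ T, D ⊆ M),
        (-1 : ℤ) ^ (T.card - 1) = 1 := by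
      set J := I.filter (fun D => D ⊆ M) with hJdef
      have hset : Ch.filter (fun T => ∀ D ∈ T, D ⊆ M)
          = J.powerset.filter
              (fun T => T.Nonempty ∧ ∀ a ∈ T, ∀ b ∈ T, a ⊆ b ∨ b ⊆ a) := by
        ext T
        simp only [hCh, hJdef, Finset.mem_filter, Finset.mem_powerset]
        constructor
        · rintro ⟨⟨hTI, hne', hch⟩, hsub⟩
          exact ⟨fun D hD => Finset.mem_filter.mpr ⟨hTI hD, hsub D hD⟩, hne', hch⟩
        · rintro ⟨hTJ, hne', hch⟩
          exact ⟨⟨fun D hD => (Finset.mem_filter.mp (hTJ hD)).1, hne', hch⟩,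
            fun D hD => (Finset.mem_filter.mp (hTJ hD)).2⟩
      rw [hset]
      exact eulerChar_cone J M (Finset.mem_filter.mpr ⟨hM, subset_rfl⟩)
        (fun a ha => Or.inl (Finset.mem_filter.mp ha).2)
    -- second sum: chains containing something not below M
    have hsecond : ∑ T ∈ Ch.filter (fun T => ¬ ∀ D ∈ T, D ⊆ M),
        (-1 : ℤ) ^ (T.card - 1) = 0 := by
      set 𝒯 := Ch.filter (fun T => ¬ ∀ D ∈ T, D ⊆ M) with h𝒯
      set key : Finset (Finset X) → Finset (Finset X) :=
        fun T => T.filter (fun D => ∃ E ∈ T, ¬ E ⊆ M ∧ E ⊆ D) with hkeydef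
      rw [← Finset.sum_fiberwise_of_maps_to
        (fun T hT => Finset.mem_image_of_mem key hT) (fun T => (-1 : ℤ) ^ (T.card - 1))]
      apply Finset.sum_eq_zero
      intro P hP
      obtain ⟨T₀, hT₀, hkeyT₀⟩ := Finset.mem_image.mp hP
      obtain ⟨hT₀Ch, hT₀K⟩ := Finset.mem_filter.mp hT₀
      obtain ⟨hT₀I, hT₀ne, hT₀ch⟩ := (hmemCh T₀).mp hT₀Ch
      push_neg at hT₀K
      -- the minimum C of the part of T₀ not below M
      obtain ⟨C, hCmem, hCmin'⟩ := chain_exists_min (T₀.filter (fun D => ¬ D ⊆ M))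
        (by obtain ⟨D, hD, hDM⟩ := hT₀K; exact ⟨D, Finset.mem_filter.mpr ⟨hD, hDM⟩⟩)
        (fun a ha b hb => hT₀ch a (Finset.mem_filter.mp ha).1 b (Finset.mem_filter.mp hb).1)
      obtain ⟨hCT₀, hCM⟩ := Finset.mem_filter.mp hCmem
      have hCmin : ∀ D ∈ T₀, ¬ D ⊆ M → C ⊆ D :=
        fun D hD hDM => hCmin' D (Finset.mem_filter.mpr ⟨hD, hDM⟩)
      have hCI : C ∈ I := hT₀I hCT₀
      have hCP : C ∈ P := by
        rw [← hkeyT₀, hkeydef]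
        exact Finset.mem_filter.mpr ⟨hCT₀, C, hCT₀, hCM, subset_rfl⟩
      have hPT₀ : P ⊆ T₀ := by rw [← hkeyT₀, hkeydef]; exact Finset.filter_subset _ _
      have hPge : ∀ D ∈ P, C ⊆ D := by
        intro D hD
        rw [← hkeyT₀, hkeydef] at hD
        obtain ⟨hDT₀, E, hE, hEM, hED⟩ := Finset.mem_filter.mp hD
        exact (hCmin E hE hEM).trans hED
      have hPcard : 1 ≤ P.card := Finset.card_pos.mpr ⟨C, hCP⟩
      -- C ∩ M ∈ I
      have hCcapM : C ∩ M ∈ I := by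
        rcases hcl C hCI M hM with h | h
        · exact h
        · have heq : C ∪ M = M :=
            (Finset.eq_of_subset_of_card_le Finset.subset_union_right (hMmax _ h)).symm
          exact absurd (heq ▸ Finset.subset_union_left) hCM
      set L := I.filter (fun D => D ⊆ C ∩ M) with hLdef
      have hLsub : ∀ D ∈ L, D ∈ I ∧ D ⊆ C ∩ M := fun D hD => Finset.mem_filter.mp hD
      have hLnotC : C ∉ L := by
        intro h
        exact hCM (((hLsub C h).2).trans (Finset.inter_subset_right))
      have hLcard : L.card ≤ n := by
        have hsub : L ⊆ I.erase C := fun D hD =>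
          Finset.mem_erase.mpr ⟨fun h => hLnotC (h ▸ hD), (hLsub D hD).1⟩
        have := Finset.card_le_card hsub
        rw [Finset.card_erase_of_mem hCI] at this
        omega
      have hL1 : eulerChar L = 1 := by
        refine ih L hLcard ⟨C ∩ M, Finset.mem_filter.mpr ⟨hCcapM, subset_rfl⟩⟩ ?_
        intro A hA B hB
        obtain ⟨hAI, hAs⟩ := hLsub A hA
        obtain ⟨hBI, hBs⟩ := hLsub B hB
        rcases hcl A hAI B hBI with h | h
        · exact Or.inl (Finset.mem_filter.mpr ⟨h, (Finset.inter_subset_left).trans hAs⟩)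
        · exact Or.inr (Finset.mem_filter.mpr ⟨h, Finset.union_subset hAs hBs⟩)
      set 𝒮 := L.powerset.filter (fun S => ∀ a ∈ S, ∀ b ∈ S, a ⊆ b ∨ b ⊆ a) with h𝒮
      -- the alternating sum over ALL chains of L (incl. empty) vanishes
      have hSsum : ∑ S ∈ 𝒮, (-1 : ℤ) ^ S.card = 0 := by
        have hempty : (∅ : Finset (Finset X)) ∈ 𝒮 := by simp [h𝒮]
        rw [← Finset.add_sum_erase 𝒮 (fun S => (-1 : ℤ) ^ S.card) hempty]
        have herase : 𝒮.erase ∅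
            = L.powerset.filter
                (fun S => S.Nonempty ∧ ∀ a ∈ S, ∀ b ∈ S, a ⊆ b ∨ b ⊆ a) := by
          ext S
          simp only [h𝒮, Finset.mem_erase, Finset.mem_filter, Finset.mem_powerset,
            Finset.nonempty_iff_ne_empty]
          tauto
        have hneg : ∑ S ∈ 𝒮.erase ∅, (-1 : ℤ) ^ S.card = -1 := by
          rw [herase]
          have : ∀ S ∈ L.powerset.filter
              (fun S => S.Nonempty ∧ ∀ a ∈ S, ∀ b ∈ S, a ⊆ b ∨ b ⊆ a),
              (-1 : ℤ) ^ S.card = -((-1 : ℤ) ^ (S.card - 1)) := by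
            intro S hS
            have hSne : S.Nonempty := (Finset.mem_filter.mp hS).2.1
            have h1 : S.card ≠ 0 := fun h => by
              simp [Finset.card_eq_zero.mp h] at hSne
            rw [neg_one_pow_pred h1]; ring
          rw [Finset.sum_congr rfl this, Finset.sum_neg_distrib]
          have : eulerChar L = ∑ S ∈ L.powerset.filter
              (fun S => S.Nonempty ∧ ∀ a ∈ S, ∀ b ∈ S, a ⊆ b ∨ b ⊆ a),
              (-1 : ℤ) ^ (S.card - 1) := rfl
          rw [← this, hL1]
        rw [hneg]
        simp
      -- bijection between the fiber over P and 𝒮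
      have hbij : ∑ T ∈ 𝒯.filter (fun T => key T = P), (-1 : ℤ) ^ (T.card - 1)
          = ∑ S ∈ 𝒮, (-1 : ℤ) ^ (S.card + P.card - 1) := by
        refine Finset.sum_bij' (fun T _ => T \ P) (fun S _ => S ∪ P) ?_ ?_ ?_ ?_ ?_
        · -- T \ P ∈ 𝒮
          intro T hT
          obtain ⟨hT𝒯, hkeyT⟩ := Finset.mem_filter.mp hT
          obtain ⟨hTCh, _⟩ := Finset.mem_filter.mp hT𝒯
          obtain ⟨hTI, hTne, hTch⟩ := (hmemCh T).mp hTCh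
          have hPT : P ⊆ T := by rw [← hkeyT, hkeydef]; exact Finset.filter_subset _ _
          have hCT : C ∈ T := hPT hCP
          refine Finset.mem_filter.mpr ⟨Finset.mem_powerset.mpr ?_, ?_⟩
          · intro D hD
            obtain ⟨hDT, hDP⟩ := Finset.mem_sdiff.mp hD
            have hDnot : ¬ ∃ E ∈ T, ¬ E ⊆ M ∧ E ⊆ D := by
              intro hEx
              exact hDP (by rw [← hkeyT, hkeydef]; exact Finset.mem_filter.mpr ⟨hDT, hEx⟩)
            push_neg at hDnot
            have hDM : D ⊆ M := by
              by_contra h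
              exact hDnot D hDT h subset_rfl
            have hDC : D ⊆ C := by
              rcases hTch C hCT D hDT with h | h
              · exact absurd h (hDnot C hCT hCM)
              · exact h
            exact Finset.mem_filter.mpr ⟨hTI hDT, Finset.subset_inter hDC hDM⟩
          · intro a ha b hb
            exact hTch a (Finset.mem_sdiff.mp ha).1 b (Finset.mem_sdiff.mp hb).1
        · -- S ∪ P ∈ fiber
          intro S hS
          obtain ⟨hSL, hSch⟩ := Finset.mem_filter.mp hS
          rw [Finset.mem_powerset] at hSL
          have hSfacts : ∀ D ∈ S, D ∈ I ∧ D ⊆ C ∩ M := fun D hD => hLsub D (hSL hD)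
          have hSnotP : ∀ D ∈ S, D ∉ P := by
            intro D hD hDP
            exact hCM ((hPge D hDP).trans ((hSfacts D hD).2.trans Finset.inter_subset_right))
          have hUch : ∀ a ∈ S ∪ P, ∀ b ∈ S ∪ P, a ⊆ b ∨ b ⊆ a := by
            intro a ha b hb
            rcases Finset.mem_union.mp ha with ha' | ha'
            · rcases Finset.mem_union.mp hb with hb' | hb'
              · exact hSch a ha' b hb'
              · exact Or.inl (((hSfacts a ha').2.trans Finset.inter_subset_left).trans
                  (hPge b hb'))
            · rcases Finset.mem_union.mp hb with hb' | hb'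
              · exact Or.inr (((hSfacts b hb').2.trans Finset.inter_subset_left).trans
                  (hPge a ha'))
              · exact hT₀ch a (hPT₀ ha') b (hPT₀ hb')
          refine Finset.mem_filter.mpr ⟨Finset.mem_filter.mpr ⟨(hmemCh _).mpr
            ⟨Finset.union_subset (fun D hD => (hSfacts D hD).1) (fun D hD => hT₀I (hPT₀ hD)),
             ⟨C, Finset.mem_union_right _ hCP⟩, hUch⟩, ?_⟩, ?_⟩
          · push_neg
            exact ⟨C, Finset.mem_union_right _ hCP, hCM⟩
          · -- key (S ∪ P) = P
            rw [hkeydef]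
            ext D
            simp only [Finset.mem_filter, Finset.mem_union]
            constructor
            · rintro ⟨hD, E, hE, hEM, hED⟩
              rcases hD with hDS | hDP
              · exact absurd (hED.trans ((hSfacts D hDS).2.trans
                  Finset.inter_subset_right)) hEM
              · exact hDP
            · intro hD
              exact ⟨Or.inr hD, C, Or.inr hCP, hCM, hPge D hD⟩
        · -- left inverse
          intro T hT
          have hkeyT := (Finset.mem_filter.mp hT).2
          have hPT : P ⊆ T := by rw [← hkeyT, hkeydef]; exact Finset.filter_subset _ _
          exact Finset.sdiff_union_of_subset hPT
        · -- right inverse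
          intro S hS
          obtain ⟨hSL, _⟩ := Finset.mem_filter.mp hS
          rw [Finset.mem_powerset] at hSL
          have hSnotP : ∀ D ∈ S, D ∉ P := by
            intro D hD hDP
            exact hCM ((hPge D hDP).trans (((hLsub D (hSL hD)).2).trans
              Finset.inter_subset_right))
          ext x
          simp only [Finset.mem_sdiff, Finset.mem_union]
          constructor
          · rintro ⟨hx | hx, hxP⟩
            · exact hx
            · exact absurd hx hxP
          · intro hx
            exact ⟨Or.inl hx, hSnotP x hx⟩
        · -- values agree
          intro T hT
          have hkeyT := (Finset.mem_filter.mp hT).2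
          have hPT : P ⊆ T := by rw [← hkeyT, hkeydef]; exact Finset.filter_subset _ _
          have hcards : (T \ P).card = T.card - P.card := Finset.card_sdiff_of_subset hPT
          have hle : P.card ≤ T.card := Finset.card_le_card hPT
          have hC1 : 1 ≤ P.card := hPcard
          show (-1 : ℤ) ^ (T.card - 1) = (-1 : ℤ) ^ ((T \ P).card + P.card - 1)
          congr 1
          omega
      rw [hbij]
      have hfactor : ∀ S ∈ 𝒮, (-1 : ℤ) ^ (S.card + P.card - 1)
          = (-1 : ℤ) ^ (P.card - 1) * (-1 : ℤ) ^ S.card := by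
        intro S _
        rw [← pow_add]
        congr 1
        omega
      rw [Finset.sum_congr rfl hfactor, ← Finset.mul_sum, hSsum, mul_zero]
    -- combine
    unfold eulerChar
    rw [← hCh, ← Finset.sum_filter_add_sum_filter_not Ch (fun T => ∀ D ∈ T, D ⊆ M),
      hJfirst, hsecond]
    norm_num
end

section
/- Let r ≥ 1 and let k₁,…,k_r and n₁,…,n_r be integers with k₁+⋯+k_r = n₁+⋯+n_r. Let 𝓘 be the family of subsets A of {1,…,r} with A ≠ ∅, A ≠ {1,…,r}, and ∑_{i∈A} k_i ≤ ∑_{i∈A} n_i. Then ∑_{l≥0} ∑_{chains C₁⊊⋯⊊C_l in 𝓘} (-1)^l equals (-1)^{r-1} if (k₁,…,k_r) = (n₁,…,n_r), and 0 otherwise. -/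
open Finset
open scoped Classical

/-- The alternating sum `∑_{l ≥ 0} ∑_{chains C₁ ⊊ ⋯ ⊊ C_l in I} (-1)^l`, where a chain is
identified with the subset `T ⊆ I` of its members (totally ordered by inclusion) and has
length `T.card`; the empty chain (`l = 0`) contributes `+1`. -/
noncomputable def chainSum {β : Type*} (I : Finset (Finset β)) : ℤ :=
  ∑ T ∈ I.powerset.filter (fun T => ∀ a ∈ T, ∀ b ∈ T, a ⊆ b ∨ b ⊆ a),
    (-1 : ℤ) ^ T.card

section Aux

variable {β : Type*} [DecidableEq β]

/-- The set of chains (as finsets of members) in the family `I`. -/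
noncomputable def chainsSet (I : Finset (Finset β)) : Finset (Finset (Finset β)) :=
  I.powerset.filter (fun T => ∀ a ∈ T, ∀ b ∈ T, a ⊆ b ∨ b ⊆ a)

lemma chainSum_def (I : Finset (Finset β)) :
    chainSum I = ∑ T ∈ chainsSet I, (-1 : ℤ) ^ T.card := by
  unfold chainSum chainsSet
  exact Finset.sum_congr (Finset.filter_congr_decidable _ _ _) (fun _ _ => rfl)

lemma mem_chainsSet {I T : Finset (Finset β)} :
    T ∈ chainsSet I ↔ T ⊆ I ∧ ∀ a ∈ T, ∀ b ∈ T, a ⊆ b ∨ b ⊆ a := by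
  simp [chainsSet]

/-- The "matching" set attached to a chain `T` and a point `p` : `p` inserted into the
largest `p`-free member of `T` (or `{p}` if there is none). -/
noncomputable def mT (p : β) (T : Finset (Finset β)) : Finset β :=
  insert p ((T.filter (fun A => p ∉ A)).sup id)

lemma p_mem_mT (p : β) (T : Finset (Finset β)) : p ∈ mT p T :=
  mem_insert_self _ _

lemma sup_subset_of_p_mem {p : β} {T : Finset (Finset β)}
    (hch : ∀ a ∈ T, ∀ b ∈ T, a ⊆ b ∨ b ⊆ a) {B : Finset β} (hB : B ∈ T) (hpB : p ∈ B) :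
    (T.filter (fun A => p ∉ A)).sup id ⊆ B := by
  have h : (T.filter (fun A => p ∉ A)).sup id ≤ B := by
    apply Finset.sup_le
    intro C hC
    obtain ⟨hCT, hpC⟩ := mem_filter.mp hC
    rcases hch C hCT B hB with h | h
    · exact h
    · exact absurd (h hpB) hpC
  exact h

lemma mT_comparable {p : β} {T : Finset (Finset β)}
    (hch : ∀ a ∈ T, ∀ b ∈ T, a ⊆ b ∨ b ⊆ a) {B : Finset β} (hB : B ∈ T) :
    B ⊆ mT p T ∨ mT p T ⊆ B := by
  by_cases hpB : p ∈ B
  · right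
    exact insert_subset hpB (sup_subset_of_p_mem hch hB hpB)
  · left
    exact (Finset.le_sup (f := id) (mem_filter.mpr ⟨hB, hpB⟩)).trans (subset_insert _ _)

lemma sup_mem_of_chain {p : β} {T : Finset (Finset β)}
    (hch : ∀ a ∈ T, ∀ b ∈ T, a ⊆ b ∨ b ⊆ a)
    (hne : (T.filter (fun A => p ∉ A)).Nonempty) :
    (T.filter (fun A => p ∉ A)).sup id ∈ T.filter (fun A => p ∉ A) := by
  obtain ⟨A, hA, hmax⟩ := (T.filter (fun A => p ∉ A)).exists_max_image card hne
  have hAmax : ∀ B ∈ T.filter (fun A => p ∉ A), B ⊆ A := by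
    intro B hB
    rcases hch A (filter_subset _ _ hA) B (filter_subset _ _ hB) with h | h
    · exact le_of_eq (Finset.eq_of_subset_of_card_le h (hmax B hB)).symm
    · exact h
  have hsup : (T.filter (fun A => p ∉ A)).sup id = A := by
    apply le_antisymm
    · apply Finset.sup_le
      intro B hB
      exact hAmax B hB
    · exact Finset.le_sup (f := id) hA
  rwa [hsup]

/-- The involution: toggle `mT p T` in the chain `T`. -/
noncomputable def gT (p : β) (T : Finset (Finset β)) : Finset (Finset β) :=
  if mT p T ∈ T then T.erase (mT p T) else insert (mT p T) T

lemma filter_gT (p : β) (T : Finset (Finset β)) :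
    (gT p T).filter (fun A => p ∉ A) = T.filter (fun A => p ∉ A) := by
  unfold gT
  split_ifs with h
  · rw [Finset.filter_erase, Finset.erase_eq_of_notMem]
    simp [p_mem_mT]
  · rw [Finset.filter_insert]
    simp [p_mem_mT]

lemma mT_gT (p : β) (T : Finset (Finset β)) : mT p (gT p T) = mT p T := by
  unfold mT
  rw [filter_gT]

lemma gT_chainsSet {p : β} {I T : Finset (Finset β)} (hT : T ∈ chainsSet I)
    (hm : mT p T ∈ I) : gT p T ∈ chainsSet I := by
  obtain ⟨hTI, hch⟩ := mem_chainsSet.mp hT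
  unfold gT
  split_ifs with h
  · refine mem_chainsSet.mpr ⟨(erase_subset _ _).trans hTI, ?_⟩
    intro a ha b hb
    exact hch a (mem_of_mem_erase ha) b (mem_of_mem_erase hb)
  · refine mem_chainsSet.mpr ⟨insert_subset hm hTI, ?_⟩
    intro a ha b hb
    rcases mem_insert.mp ha with rfl | ha' <;> rcases mem_insert.mp hb with rfl | hb'
    · exact Or.inl subset_rfl
    · exact (mT_comparable hch hb').symm
    · exact mT_comparable hch ha'
    · exact hch a ha' b hb'

lemma gT_sign (p : β) (T : Finset (Finset β)) :
    (-1 : ℤ) ^ T.card + (-1 : ℤ) ^ (gT p T).card = 0 := by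
  unfold gT
  split_ifs with h
  · have hc : T.card = (T.erase (mT p T)).card + 1 := (Finset.card_erase_add_one h).symm
    rw [hc, pow_succ]
    ring
  · rw [Finset.card_insert_of_notMem h, pow_succ]
    ring

lemma gT_ne (p : β) (T : Finset (Finset β)) : gT p T ≠ T := by
  unfold gT
  split_ifs with h
  · exact Finset.erase_ne_self.mpr h
  · exact Finset.insert_ne_self.mpr h

lemma gT_invol {p : β} (T : Finset (Finset β)) : gT p (gT p T) = T := by
  have hrfl : gT p (gT p T) = if mT p (gT p T) ∈ gT p T then (gT p T).erase (mT p (gT p T))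
      else insert (mT p (gT p T)) (gT p T) := rfl
  by_cases h : mT p T ∈ T
  · have h1 : gT p T = T.erase (mT p T) := if_pos h
    have h2 : mT p (gT p T) ∉ gT p T := by
      rw [mT_gT, h1]; exact Finset.notMem_erase _ _
    rw [hrfl, if_neg h2, mT_gT, h1, Finset.insert_erase h]
  · have h1 : gT p T = insert (mT p T) T := if_neg h
    have h2 : mT p (gT p T) ∈ gT p T := by
      rw [mT_gT, h1]; exact mem_insert_self _ _
    rw [hrfl, if_pos h2, mT_gT, h1, Finset.erase_insert h]

/-- Main vanishing lemma: if the family is closed under the matching operation on chains,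
then the alternating chain sum vanishes. -/
lemma chainSum_eq_zero (I : Finset (Finset β)) (p : β)
    (hI : ∀ T ∈ chainsSet I, mT p T ∈ I) :
    chainSum I = 0 := by
  rw [chainSum_def]
  refine Finset.sum_involution (fun T _ => gT p T) (fun T _ => gT_sign p T)
    (fun T _ _ => gT_ne p T) (fun T hT => gT_chainsSet hT (hI T hT))
    (fun T _ => gT_invol T)

end Aux

section Proper

variable {β : Type*} [DecidableEq β]

/-- The family of proper nonempty subsets of `u`. -/
noncomputable def properFam (u : Finset β) : Finset (Finset β) :=
  u.powerset.filter (fun A => A.Nonempty ∧ A ≠ u)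

lemma mem_properFam {u A : Finset β} :
    A ∈ properFam u ↔ A ⊆ u ∧ A.Nonempty ∧ A ≠ u := by
  simp [properFam]

lemma chainSum_properFam (u : Finset β) (hu : u.Nonempty) :
    chainSum (properFam u) = (-1 : ℤ) ^ (u.card - 1) := by
  revert hu
  induction u using Finset.strongInduction with
  | _ u ih =>
  intro hu
  obtain ⟨p, hp⟩ := hu
  by_cases hcard : u.card ≤ 1
  · -- u is a singleton, family is empty
    have hu1 : u = {p} := by
      apply Finset.eq_singleton_iff_unique_mem.mpr
      refine ⟨hp, fun x hx => ?_⟩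
      by_contra hxp
      have : 2 ≤ u.card := Finset.one_lt_card.mpr ⟨x, hx, p, hp, hxp⟩
      omega
    have hfam : properFam u = ∅ := by
      apply Finset.eq_empty_iff_forall_notMem.mpr
      intro A hA
      obtain ⟨hAu, hAne, hAnu⟩ := mem_properFam.mp hA
      rw [hu1] at hAu hAnu
      rcases Finset.subset_singleton_iff.mp hAu with rfl | rfl
      · exact hAne.ne_empty rfl
      · exact hAnu rfl
    rw [hfam]
    have hc : u.card = 1 := by rw [hu1]; simp
    rw [hc]
    have hset : chainsSet (∅ : Finset (Finset β)) = {∅} := by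
      unfold chainsSet
      rw [Finset.powerset_empty, Finset.filter_singleton]
      simp
    rw [chainSum_def, hset]
    simp
  · push_neg at hcard
    set U := u.erase p with hU
    have hpU : p ∉ U := Finset.notMem_erase _ _
    have hUu : U ⊆ u := Finset.erase_subset _ _
    have hUcard : U.card + 1 = u.card := Finset.card_erase_add_one hp
    have hUne : U.Nonempty := Finset.card_pos.mp (by omega)
    have hUnu : U ≠ u := fun h => hpU (h ▸ hp)
    have hUmem : U ∈ properFam u := mem_properFam.mpr ⟨hUu, hUne, hUnu⟩
    -- B ∈ properFam u comparable to U, B ≠ U ⇒ B ⊊ U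
    have hbelow : ∀ B ∈ properFam u, B ≠ U → (B ⊆ U ∨ U ⊆ B) → B ⊆ U := by
      intro B hB hBU hcomp
      obtain ⟨hBu, hBne, hBnu⟩ := mem_properFam.mp hB
      rcases hcomp with h | h
      · exact h
      · exfalso
        have h1 : B.card < u.card := Finset.card_lt_card (ssubset_of_subset_of_ne hBu hBnu)
        have h2 : U.card ≤ B.card := Finset.card_le_card h
        exact hBU ((Finset.eq_of_subset_of_card_le h (by omega)).symm)
    -- key membership fact for the vanishing lemma on (properFam u).erase U
    have hclosed : ∀ T ∈ chainsSet ((properFam u).erase U), mT p T ∈ (properFam u).erase U := by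
      intro T hT
      obtain ⟨hTI, hch⟩ := mem_chainsSet.mp hT
      have hmne : mT p T ≠ U := fun h => hpU (h ▸ p_mem_mT p T)
      refine Finset.mem_erase.mpr ⟨hmne, ?_⟩
      by_cases hne : (T.filter (fun A => p ∉ A)).Nonempty
      · obtain ⟨hAT, hpA⟩ := mem_filter.mp (sup_mem_of_chain hch hne)
        set A := (T.filter (fun A => p ∉ A)).sup id with hA
        have hAI : A ∈ (properFam u).erase U := hTI hAT
        obtain ⟨hAU, hAmem⟩ := Finset.mem_erase.mp hAI
        obtain ⟨hAu, hAne, hAnu⟩ := mem_properFam.mp hAmem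
        have hmeq : mT p T = insert p A := rfl
        rw [hmeq]
        refine mem_properFam.mpr ⟨insert_subset hp hAu, insert_nonempty _ _, ?_⟩
        intro hins
        -- insert p A = u forces A = U
        apply hAU
        apply Finset.Subset.antisymm
        · exact Finset.subset_erase.mpr ⟨hAu, hpA⟩
        · intro x hx
          have hxu : x ∈ u := hUu hx
          have hxp : x ≠ p := fun h => hpU (h ▸ hx)
          have hxA : x ∈ insert p A := by rw [hins]; exact hxu
          rcases mem_insert.mp hxA with h | h
          · exact absurd h hxp
          · exact h
      · rw [Finset.not_nonempty_iff_eq_empty] at hne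
        have hmeq : mT p T = {p} := by
          unfold mT
          rw [hne]
          simp
        rw [hmeq]
        refine mem_properFam.mpr ⟨Finset.singleton_subset_iff.mpr hp, singleton_nonempty _, ?_⟩
        intro h
        rw [← h] at hcard
        simp at hcard
    -- split the chain sum
    have hsplit : chainSum (properFam u) =
        (∑ T ∈ (chainsSet (properFam u)).filter (fun T => ¬ U ∈ T), (-1 : ℤ) ^ T.card) +
        (∑ T ∈ (chainsSet (properFam u)).filter (fun T => U ∈ T), (-1 : ℤ) ^ T.card) := by
      rw [chainSum_def, ← Finset.sum_filter_add_sum_filter_not (chainsSet (properFam u))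
        (fun T => U ∈ T)]
      ring
    -- first part : chains avoiding U = chains in the erased family
    have hfirst : (chainsSet (properFam u)).filter (fun T => ¬ U ∈ T)
        = chainsSet ((properFam u).erase U) := by
      ext T
      simp only [Finset.mem_filter, mem_chainsSet]
      constructor
      · rintro ⟨⟨hTI, hch⟩, hUT⟩
        exact ⟨Finset.subset_erase.mpr ⟨hTI, hUT⟩, hch⟩
      · rintro ⟨hTI, hch⟩
        obtain ⟨h1, h2⟩ := Finset.subset_erase.mp hTI
        exact ⟨⟨h1, hch⟩, h2⟩
    have hzero : (∑ T ∈ chainsSet ((properFam u).erase U), (-1 : ℤ) ^ T.card) = 0 := by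
      rw [← chainSum_def]
      exact chainSum_eq_zero _ p hclosed
    -- second part : bijection with chains in properFam U
    have hsecond : (∑ T ∈ (chainsSet (properFam u)).filter (fun T => U ∈ T), (-1 : ℤ) ^ T.card)
        = ∑ T' ∈ chainsSet (properFam U), -(-1 : ℤ) ^ T'.card := by
      refine Finset.sum_nbij' (fun T => T.erase U) (fun T' => insert U T') ?_ ?_ ?_ ?_ ?_
      · intro T hT
        obtain ⟨hTmem, hUT⟩ := Finset.mem_filter.mp hT
        obtain ⟨hTI, hch⟩ := mem_chainsSet.mp hTmem
        refine mem_chainsSet.mpr ⟨?_, fun a ha b hb =>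
          hch a (mem_of_mem_erase ha) b (mem_of_mem_erase hb)⟩
        intro B hB
        obtain ⟨hBU, hBT⟩ := Finset.mem_erase.mp hB
        have hBmem := hTI hBT
        have hBsub : B ⊆ U := hbelow B hBmem hBU (hch B hBT U hUT)
        obtain ⟨_, hBne, _⟩ := mem_properFam.mp hBmem
        exact mem_properFam.mpr ⟨hBsub, hBne, hBU⟩
      · intro T' hT'
        obtain ⟨hTI, hch⟩ := mem_chainsSet.mp hT'
        have hsub : ∀ B ∈ T', B ⊆ U := by
          intro B hB
          exact (mem_properFam.mp (hTI hB)).1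
        refine Finset.mem_filter.mpr ⟨mem_chainsSet.mpr ⟨?_, ?_⟩, mem_insert_self _ _⟩
        · refine insert_subset hUmem ?_
          intro B hB
          obtain ⟨hBU, hBne, hBnU⟩ := mem_properFam.mp (hTI hB)
          refine mem_properFam.mpr ⟨hBU.trans hUu, hBne, ?_⟩
          intro h
          exact hUnu (Finset.Subset.antisymm hUu (h ▸ hBU))
        · intro a ha b hb
          rcases mem_insert.mp ha with rfl | ha' <;> rcases mem_insert.mp hb with rfl | hb'
          · exact Or.inl subset_rfl
          · exact Or.inr (hsub b hb')
          · exact Or.inl (hsub a ha')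
          · exact hch a ha' b hb'
      · intro T hT
        exact Finset.insert_erase (Finset.mem_filter.mp hT).2
      · intro T' hT'
        have hUT' : U ∉ T' := by
          intro h
          exact (mem_properFam.mp ((mem_chainsSet.mp hT').1 h)).2.2 rfl
        exact Finset.erase_insert hUT'
      · intro T hT
        have hUT := (Finset.mem_filter.mp hT).2
        have hc : T.card = (T.erase U).card + 1 := (Finset.card_erase_add_one hUT).symm
        rw [hc, pow_succ]
        ring
    have hIH : chainSum (properFam U) = (-1 : ℤ) ^ (U.card - 1) :=
      ih U (Finset.erase_ssubset hp) hUne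
    rw [hsplit, hfirst, hzero, hsecond]
    rw [Finset.sum_neg_distrib, ← chainSum_def, hIH]
    obtain ⟨m, hm⟩ : ∃ m, u.card = m + 2 := ⟨u.card - 2, by omega⟩
    have hUc : U.card = m + 1 := by omega
    rw [hUc, hm]
    rw [show m + 2 - 1 = m + 1 by omega, show m + 1 - 1 = m by omega, pow_succ]
    ring

end Proper

/-- Let `r ≥ 1` and `k₁,…,k_r`, `n₁,…,n_r` be integers with equal total sums. For the family
`I` of proper non-empty subsets `A` of `{1,…,r}` with `∑_{i∈A} k_i ≤ ∑_{i∈A} n_i`, the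
alternating chain sum `∑_{l≥0} ∑_{chains of length l in I} (-1)^l` equals `(-1)^{r-1}` if
`(k₁,…,k_r) = (n₁,…,n_r)` and `0` otherwise. -/
theorem chainSum_subset_family (r : ℕ) (hr : 1 ≤ r) (k n : Fin r → ℤ)
    (hsum : ∑ i, k i = ∑ i, n i) :
    chainSum ((Finset.univ : Finset (Fin r)).powerset.filter
        (fun A => A.Nonempty ∧ A ≠ Finset.univ ∧ ∑ i ∈ A, k i ≤ ∑ i ∈ A, n i))
      = if k = n then (-1 : ℤ) ^ (r - 1) else 0 := by
  haveI : NeZero r := ⟨by omega⟩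
  by_cases hkn : k = n
  · subst hkn
    rw [if_pos rfl]
    have hfam : ((Finset.univ : Finset (Fin r)).powerset.filter
        (fun A => A.Nonempty ∧ A ≠ Finset.univ ∧ ∑ i ∈ A, k i ≤ ∑ i ∈ A, k i))
        = properFam (Finset.univ : Finset (Fin r)) := by
      unfold properFam
      ext A
      simp only [Finset.mem_filter, Finset.mem_powerset, le_refl, and_true]
    rw [hfam, chainSum_properFam _ Finset.univ_nonempty]
    simp
  · rw [if_neg hkn]
    have hex : ∃ p, k p < n p := by
      by_contra h
      push_neg at h
      apply hkn
      funext i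
      exact ((Finset.sum_eq_sum_iff_of_le (fun i _ => h i)).mp hsum.symm i (mem_univ i)).symm
    obtain ⟨p, hp⟩ := hex
    apply chainSum_eq_zero _ p
    intro T hT
    obtain ⟨hTI, hch⟩ := mem_chainsSet.mp hT
    by_cases hne : (T.filter (fun A => p ∉ A)).Nonempty
    · obtain ⟨hAT, hpA⟩ := mem_filter.mp (sup_mem_of_chain hch hne)
      set A := (T.filter (fun B => p ∉ B)).sup id with hA
      have hAI := hTI hAT
      simp only [Finset.mem_filter, Finset.mem_powerset] at hAI ⊢
      obtain ⟨-, hAne, hAnu, hAsum⟩ := hAI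
      have hmeq : mT p T = insert p A := rfl
      rw [hmeq]
      refine ⟨Finset.subset_univ _, insert_nonempty _ _, ?_, ?_⟩
      · intro h
        have h1 : ∑ i ∈ insert p A, k i = k p + ∑ i ∈ A, k i := Finset.sum_insert hpA
        have h2 : ∑ i ∈ insert p A, n i = n p + ∑ i ∈ A, n i := Finset.sum_insert hpA
        rw [h] at h1 h2
        rw [h1, h2] at hsum
        linarith
      · rw [Finset.sum_insert hpA, Finset.sum_insert hpA]
        linarith
    · rw [Finset.not_nonempty_iff_eq_empty] at hne
      have hmeq : mT p T = {p} := by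
        unfold mT
        rw [hne]
        simp
      rw [hmeq]
      simp only [Finset.mem_filter, Finset.mem_powerset]
      refine ⟨Finset.subset_univ _, singleton_nonempty _, ?_, ?_⟩
      · intro h
        have h1 : ∑ i, k i = k p := by rw [← h]; simp
        have h2 : ∑ i, n i = n p := by rw [← h]; simp
        rw [h1, h2] at hsum
        exact absurd hsum (ne_of_lt hp)
      · simpa using le_of_lt hp
end

section
/- Let σ₁, σ₂ be permutations of {1,…,k} such that the group generated by σ₁ and σ₂ acts transitively on {1,…,k}, and let q : C(σ₂) → {2,3,…} be a coloring of the cycles of σ₂ satisfying ∑_{i∈C(σ₂)} q(i) = |C(σ₁)| + |C(σ₂)|. Define 𝓘 to be the family of subsets A ⊂ C(σ₂) with A ≠ ∅, A ≠ C(σ₂), such that at most ∑_{i∈A}(q(i)-1) cycles of σ₁ intersect the support of the cycles in A. Then ∑_{l≥0} ∑_{chains C₁⊊⋯⊊C_l in 𝓘} (-1)^l equals 1 if 𝓘 = ∅ and 0 otherwise. -/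
open Finset Equiv
open scoped Classical

set_option maxHeartbeats 1000000

/-- The cycle (orbit) of the point `x` under the permutation `σ`, as a set of points.
(Fixed points give singleton cycles.) -/
noncomputable def orbitOf {k : ℕ} (σ : Perm (Fin k)) (x : Fin k) : Finset (Fin k) :=
  Finset.univ.filter fun y => σ.SameCycle x y

/-- The set `C(σ)` of cycles of `σ`, each cycle represented by its set of points. -/
noncomputable def cyclesOf {k : ℕ} (σ : Perm (Fin k)) : Finset (Finset (Fin k)) :=
  Finset.univ.image (orbitOf σ)

/-- The number of cycles of `σ₁` which intersect `⋃ A`, where `A` is a set of cycles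
(of some other permutation). -/
noncomputable def meetCount {k : ℕ} (σ₁ : Perm (Fin k))
    (A : Finset (Finset (Fin k))) : ℕ :=
  ((cyclesOf σ₁).filter fun d => (d ∩ A.biUnion id).Nonempty).card

/-- The family `I` of non-trivial subsets `A` of `C(σ₂)` such that at most
`∑_{i ∈ A} (q(i) - 1)` cycles of `σ₁` intersect `⋃ A`. -/
noncomputable def badFamily {k : ℕ} (σ₁ σ₂ : Perm (Fin k))
    (q : Finset (Fin k) → ℕ) : Finset (Finset (Finset (Fin k))) :=
  (cyclesOf σ₂).powerset.filter fun A =>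
    A.Nonempty ∧ A ≠ cyclesOf σ₂ ∧
      (meetCount σ₁ A : ℤ) ≤ ∑ c ∈ A, ((q c : ℤ) - 1)

/-! ### Abstract part: the chain sum vanishes for a family with a "join-friendly" element. -/

section Abstract

variable {β : Type*} [DecidableEq β]

/-- A nonempty chain of finsets has a top element. -/
lemma exists_top_of_chain (S : Finset (Finset β)) (hS : S.Nonempty)
    (hchain : ∀ a ∈ S, ∀ b ∈ S, a ⊆ b ∨ b ⊆ a) : ∃ C ∈ S, ∀ D ∈ S, D ⊆ C := by
  classical
  obtain ⟨m, hm, hmax⟩ := S.exists_maximal hS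
  refine ⟨m, hm, fun D hD => ?_⟩
  rcases hchain D hD m hm with h | h
  · exact h
  · by_contra hns
    exact hns (hmax hD h)

/-- A canonical top element of a family of finsets (meaningful when it exists). -/
noncomputable def topOf (S : Finset (Finset β)) : Finset β :=
  if h : ∃ C ∈ S, ∀ D ∈ S, D ⊆ C then h.choose else ∅

lemma topOf_spec {S : Finset (Finset β)} (h : ∃ C ∈ S, ∀ D ∈ S, D ⊆ C) :
    topOf S ∈ S ∧ ∀ D ∈ S, D ⊆ topOf S := by
  rw [topOf, dif_pos h]
  exact ⟨h.choose_spec.1, h.choose_spec.2⟩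

/-- The element toggled in the sign-reversing involution on chains. -/
noncomputable def pickEl (M : Finset β) (T : Finset (Finset β)) : Finset β :=
  if (T.filter fun C => ¬ M ⊆ C).Nonempty then
    topOf (T.filter fun C => ¬ M ⊆ C) ∪ M
  else M

lemma subset_pickEl (M : Finset β) (T : Finset (Finset β)) : M ⊆ pickEl M T := by
  unfold pickEl
  split_ifs
  · exact Finset.subset_union_right
  · exact Finset.Subset.refl _

lemma pickEl_congr {M : Finset β} {T T' : Finset (Finset β)}
    (h : (T.filter fun C => ¬ M ⊆ C) = (T'.filter fun C => ¬ M ⊆ C)) :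
    pickEl M T = pickEl M T' := by
  unfold pickEl
  rw [h]

lemma pickEl_insert (M : Finset β) (T : Finset (Finset β)) :
    pickEl M (insert (pickEl M T) T) = pickEl M T := by
  apply pickEl_congr
  rw [Finset.filter_insert, if_neg]
  simp [subset_pickEl M T]

lemma pickEl_erase (M : Finset β) (T : Finset (Finset β)) :
    pickEl M (T.erase (pickEl M T)) = pickEl M T := by
  apply pickEl_congr
  rw [Finset.filter_erase, Finset.erase_eq_of_notMem]
  simp [subset_pickEl M T]

/-- Key abstract lemma: if the family `I` contains an element `M` such that `A ∪ M ∈ I`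
for every `A ∈ I`, then the alternating chain sum of `I` vanishes. -/
lemma chainSum_eq_zero_of_join (I : Finset (Finset β)) (M : Finset β) (hM : M ∈ I)
    (hjoin : ∀ A ∈ I, A ∪ M ∈ I) : chainSum I = 0 := by
  unfold chainSum
  have key : ∀ T : Finset (Finset β), T ⊆ I → (∀ a ∈ T, ∀ b ∈ T, a ⊆ b ∨ b ⊆ a) →
      pickEl M T ∈ I ∧ ∀ D ∈ T, D ⊆ pickEl M T ∨ pickEl M T ⊆ D := by
    intro T hTI hchain
    by_cases hne : (T.filter fun C => ¬ M ⊆ C).Nonempty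
    · have hch' : ∀ a ∈ (T.filter fun C => ¬ M ⊆ C), ∀ b ∈ (T.filter fun C => ¬ M ⊆ C),
          a ⊆ b ∨ b ⊆ a := fun a ha b hb =>
        hchain a (Finset.mem_of_mem_filter a ha) b (Finset.mem_of_mem_filter b hb)
      obtain ⟨hmem, htop⟩ := topOf_spec (exists_top_of_chain _ hne hch')
      have hC0T : topOf (T.filter fun C => ¬ M ⊆ C) ∈ T := Finset.mem_of_mem_filter _ hmem
      have hC0I : topOf (T.filter fun C => ¬ M ⊆ C) ∈ I := hTI hC0T
      rw [pickEl, if_pos hne]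
      constructor
      · exact hjoin _ hC0I
      · intro D hD
        by_cases hMD : M ⊆ D
        · rcases hchain D hD _ hC0T with h | h
          · exact Or.inl (h.trans Finset.subset_union_left)
          · exact Or.inr (Finset.union_subset h hMD)
        · exact Or.inl ((htop D (Finset.mem_filter.mpr ⟨hD, hMD⟩)).trans
            Finset.subset_union_left)
    · rw [pickEl, if_neg hne]
      refine ⟨hM, fun D hD => Or.inr ?_⟩
      by_contra hc
      exact hne ⟨D, Finset.mem_filter.mpr ⟨hD, hc⟩⟩
  have htog : ∀ T : Finset (Finset β), T ⊆ I → (∀ a ∈ T, ∀ b ∈ T, a ⊆ b ∨ b ⊆ a) →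
      ((if pickEl M T ∈ T then T.erase (pickEl M T) else insert (pickEl M T) T) ⊆ I ∧
        ∀ a ∈ (if pickEl M T ∈ T then T.erase (pickEl M T) else insert (pickEl M T) T),
          ∀ b ∈ (if pickEl M T ∈ T then T.erase (pickEl M T) else insert (pickEl M T) T),
            a ⊆ b ∨ b ⊆ a) := by
    intro T hTI hchain
    obtain ⟨hpI, hpcomp⟩ := key T hTI hchain
    split_ifs with hpT
    · refine ⟨fun x hx => hTI (Finset.mem_of_mem_erase hx), ?_⟩
      intro a ha b hb
      exact hchain a (Finset.mem_of_mem_erase ha) b (Finset.mem_of_mem_erase hb)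
    · refine ⟨Finset.insert_subset hpI hTI, ?_⟩
      intro a ha b hb
      rcases Finset.mem_insert.mp ha with rfl | ha'
      · rcases Finset.mem_insert.mp hb with rfl | hb'
        · exact Or.inl (Finset.Subset.refl _)
        · rcases hpcomp b hb' with h | h
          · exact Or.inr h
          · exact Or.inl h
      · rcases Finset.mem_insert.mp hb with rfl | hb'
        · exact hpcomp a ha'
        · exact hchain a ha' b hb'
  refine Finset.sum_involution
    (fun T _ => if pickEl M T ∈ T then T.erase (pickEl M T) else insert (pickEl M T) T)
    ?_ ?_ ?_ ?_
  · -- signs cancel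
    intro T hT
    split_ifs with hpT
    · rw [Finset.card_erase_of_mem hpT]
      have hc : 1 ≤ T.card := Finset.card_pos.mpr ⟨_, hpT⟩
      have : (-1 : ℤ) ^ T.card = (-1 : ℤ) ^ (T.card - 1) * (-1) := by
        rw [← pow_succ, Nat.sub_add_cancel hc]
      rw [this]; ring
    · rw [Finset.card_insert_of_notMem hpT, pow_succ]
      ring
  · -- no fixed points
    intro T hT _
    split_ifs with hpT
    · intro h
      have := Finset.notMem_erase (pickEl M T) T
      rw [h] at this
      exact this hpT
    · intro h
      have hmm : pickEl M T ∈ insert (pickEl M T) T := Finset.mem_insert_self _ _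
      rw [h] at hmm
      exact hpT hmm
  · -- maps chains to chains
    intro T hT
    simp only [Finset.mem_filter, Finset.mem_powerset] at hT ⊢
    exact htog T hT.1 hT.2
  · -- involutive
    intro T hT
    by_cases hpT : pickEl M T ∈ T
    · simp only [if_pos hpT]
      have h1 : pickEl M (T.erase (pickEl M T)) = pickEl M T := pickEl_erase M T
      simp only [h1]
      rw [if_neg (Finset.notMem_erase _ _)]
      exact Finset.insert_erase hpT
    · simp only [if_neg hpT]
      have h1 : pickEl M (insert (pickEl M T) T) = pickEl M T := pickEl_insert M T
      simp only [h1]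
      rw [if_pos (Finset.mem_insert_self _ _)]
      exact Finset.erase_insert hpT

end Abstract

/-! ### Permutation-specific part. -/

section Perm

variable {k : ℕ} (σ σ₁ σ₂ : Perm (Fin k))

lemma mem_orbitOf_self (x : Fin k) : x ∈ orbitOf σ x := by
  simp only [orbitOf, Finset.mem_filter, Finset.mem_univ, true_and]
  exact Equiv.Perm.SameCycle.refl σ x

lemma orbitOf_eq_of_mem {x y : Fin k} (h : y ∈ orbitOf σ x) :
    orbitOf σ x = orbitOf σ y := by
  simp only [orbitOf, Finset.mem_filter, Finset.mem_univ, true_and] at h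
  ext z
  simp only [orbitOf, Finset.mem_filter, Finset.mem_univ, true_and]
  exact ⟨fun hz => h.symm.trans hz, fun hz => h.trans hz⟩

lemma orbitOf_mem_cyclesOf (x : Fin k) : orbitOf σ x ∈ cyclesOf σ := by
  simp only [cyclesOf, Finset.mem_image]
  exact ⟨x, Finset.mem_univ x, rfl⟩

lemma apply_mem_orbitOf (x : Fin k) : σ x ∈ orbitOf σ x := by
  simp only [orbitOf, Finset.mem_filter, Finset.mem_univ, true_and]
  exact ⟨1, by simp⟩

/-- Membership in the union of a subfamily of cycles. -/
lemma mem_biUnion_iff {A : Finset (Finset (Fin k))} (hA : A ⊆ cyclesOf σ) (x : Fin k) :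
    x ∈ A.biUnion id ↔ orbitOf σ x ∈ A := by
  constructor
  · intro hx
    obtain ⟨c, hcA, hxc⟩ := Finset.mem_biUnion.mp hx
    obtain ⟨y, _, rfl⟩ := Finset.mem_image.mp (hA hcA)
    rwa [orbitOf_eq_of_mem σ hxc] at hcA
  · intro h
    exact Finset.mem_biUnion.mpr ⟨orbitOf σ x, h, mem_orbitOf_self σ x⟩

/-- `d(A) = meetCount σ₁ A − ∑_{c ∈ A} (q(c) − 1)`. -/
noncomputable def dFun (σ₁ : Perm (Fin k)) (q : Finset (Fin k) → ℕ)
    (A : Finset (Finset (Fin k))) : ℤ :=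
  (meetCount σ₁ A : ℤ) - ∑ c ∈ A, ((q c : ℤ) - 1)

lemma dFun_empty (q : Finset (Fin k) → ℕ) : dFun σ₁ q ∅ = 0 := by
  simp [dFun, meetCount]

/-- Submodularity of `dFun`. -/
lemma dFun_submodular (q : Finset (Fin k) → ℕ) (A B : Finset (Finset (Fin k))) :
    dFun σ₁ q (A ∪ B) + dFun σ₁ q (A ∩ B) ≤ dFun σ₁ q A + dFun σ₁ q B := by
  classical
  have hsum : (∑ c ∈ A ∪ B, ((q c : ℤ) - 1)) + ∑ c ∈ A ∩ B, ((q c : ℤ) - 1)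
      = (∑ c ∈ A, ((q c : ℤ) - 1)) + ∑ c ∈ B, ((q c : ℤ) - 1) :=
    Finset.sum_union_inter
  set F : Finset (Finset (Fin k)) → Finset (Finset (Fin k)) :=
    fun X => (cyclesOf σ₁).filter fun d => (d ∩ X.biUnion id).Nonempty with hF
  have hunion : F (A ∪ B) = F A ∪ F B := by
    ext c
    simp only [hF, Finset.mem_filter, Finset.mem_union]
    constructor
    · rintro ⟨hc, x, hx⟩
      simp only [Finset.mem_inter, Finset.mem_biUnion, Finset.mem_union] at hx
      obtain ⟨hxc, d, hd, hxd⟩ := hx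
      rcases hd with hd | hd
      · exact Or.inl ⟨hc, x, Finset.mem_inter.mpr ⟨hxc,
          Finset.mem_biUnion.mpr ⟨d, hd, hxd⟩⟩⟩
      · exact Or.inr ⟨hc, x, Finset.mem_inter.mpr ⟨hxc,
          Finset.mem_biUnion.mpr ⟨d, hd, hxd⟩⟩⟩
    · rintro (⟨hc, x, hx⟩ | ⟨hc, x, hx⟩) <;>
      · refine ⟨hc, x, ?_⟩
        simp only [Finset.mem_inter, Finset.mem_biUnion] at hx ⊢
        obtain ⟨hxc, d, hd, hxd⟩ := hx
        exact ⟨hxc, d, by simp [Finset.mem_union, hd], hxd⟩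
  have hinter : F (A ∩ B) ⊆ F A ∩ F B := by
    intro c hc
    simp only [hF, Finset.mem_filter] at hc
    obtain ⟨hc1, x, hx⟩ := hc
    simp only [Finset.mem_inter, Finset.mem_biUnion] at hx
    obtain ⟨hxc, d, hd, hxd⟩ := hx
    obtain ⟨hdA, hdB⟩ := hd
    refine Finset.mem_inter.mpr ⟨?_, ?_⟩ <;>
      exact Finset.mem_filter.mpr ⟨hc1, x, Finset.mem_inter.mpr ⟨hxc,
        Finset.mem_biUnion.mpr ⟨d, by assumption, hxd⟩⟩⟩
  have hcard : (F (A ∪ B)).card + (F (A ∩ B)).card ≤ (F A).card + (F B).card := by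
    calc (F (A ∪ B)).card + (F (A ∩ B)).card
        ≤ (F A ∪ F B).card + (F A ∩ F B).card := by
          rw [hunion]
          exact Nat.add_le_add_left (Finset.card_le_card hinter) _
      _ = (F A).card + (F B).card := Finset.card_union_add_card_inter _ _
  have hm : ∀ X, meetCount σ₁ X = (F X).card := fun X => rfl
  simp only [dFun, hm]
  push_cast
  push_cast at hcard
  linarith [hcard, hsum]

/-- The weight sum over all cycles of `σ₂` equals the number of cycles of `σ₁`. -/
lemma weight_sum_eq (q : Finset (Fin k) → ℕ)
    (hsum : ∑ c ∈ cyclesOf σ₂, q c = (cyclesOf σ₁).card + (cyclesOf σ₂).card) :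
    ∑ c ∈ cyclesOf σ₂, ((q c : ℤ) - 1) = ((cyclesOf σ₁).card : ℤ) := by
  rw [Finset.sum_sub_distrib, Finset.sum_const, nsmul_eq_mul, mul_one]
  have : (∑ c ∈ cyclesOf σ₂, (q c : ℤ)) = ((∑ c ∈ cyclesOf σ₂, q c : ℕ) : ℤ) := by
    push_cast; ring
  rw [this, hsum]
  push_cast; ring

lemma dFun_full (q : Finset (Fin k) → ℕ)
    (hsum : ∑ c ∈ cyclesOf σ₂, q c = (cyclesOf σ₁).card + (cyclesOf σ₂).card) :
    dFun σ₁ q (cyclesOf σ₂) = 0 := by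
  have hmeet : meetCount σ₁ (cyclesOf σ₂) = (cyclesOf σ₁).card := by
    unfold meetCount
    rw [Finset.filter_true_of_mem]
    intro c hc
    obtain ⟨x, _, rfl⟩ := Finset.mem_image.mp hc
    refine ⟨x, Finset.mem_inter.mpr ⟨mem_orbitOf_self σ₁ x, ?_⟩⟩
    exact Finset.mem_biUnion.mpr ⟨orbitOf σ₂ x, orbitOf_mem_cyclesOf σ₂ x,
      mem_orbitOf_self σ₂ x⟩
  rw [dFun, hmeet, weight_sum_eq σ₁ σ₂ q hsum]
  ring

/-- The complement inequality, coming from transitivity. -/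
lemma dFun_compl (q : Finset (Fin k) → ℕ)
    (htrans : ∀ x y : Fin k,
      ∃ g ∈ Subgroup.closure ({σ₁, σ₂} : Set (Perm (Fin k))), g x = y)
    (hsum : ∑ c ∈ cyclesOf σ₂, q c = (cyclesOf σ₁).card + (cyclesOf σ₂).card)
    (A : Finset (Finset (Fin k))) (hA : A ⊆ cyclesOf σ₂) (hAne : A.Nonempty)
    (hAfull : A ≠ cyclesOf σ₂) :
    1 ≤ dFun σ₁ q A + dFun σ₁ q (cyclesOf σ₂ \ A) := by
  classical
  set S := A.biUnion id with hS
  have hSmem : ∀ x, x ∈ S ↔ orbitOf σ₂ x ∈ A := mem_biUnion_iff σ₂ hA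
  have hsdiff : ∀ x, x ∈ (cyclesOf σ₂ \ A).biUnion id ↔ x ∉ S := by
    intro x
    rw [mem_biUnion_iff σ₂ Finset.sdiff_subset x, Finset.mem_sdiff, hSmem]
    simp [orbitOf_mem_cyclesOf σ₂ x]
  -- S is nonempty
  have hSne : S.Nonempty := by
    obtain ⟨c, hc⟩ := hAne
    obtain ⟨y, _, rfl⟩ := Finset.mem_image.mp (hA hc)
    exact ⟨y, (hSmem y).mpr (by rwa [← orbitOf_eq_of_mem σ₂ (mem_orbitOf_self σ₂ y)])⟩
  -- complement of S is nonempty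
  have hScne : ∃ y, y ∉ S := by
    obtain ⟨c, hc, hcA⟩ := Finset.exists_of_ssubset (lt_of_le_of_ne hA hAfull)
    obtain ⟨y, _, rfl⟩ := Finset.mem_image.mp hc
    refine ⟨y, fun hy => hcA ?_⟩
    rwa [hSmem] at hy
  -- crossing point: some z ∈ S with σ₁ z ∉ S
  have hcross : ∃ z ∈ S, σ₁ z ∉ S := by
    by_contra hc
    push_neg at hc
    -- σ₁ and σ₂ stabilize S
    have himg : S.image σ₁ = S := by
      apply Finset.eq_of_subset_of_card_le
      · intro y hy
        obtain ⟨z, hz, rfl⟩ := Finset.mem_image.mp hy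
        exact hc z hz
      · rw [Finset.card_image_of_injective _ σ₁.injective]
    have h1 : ∀ x : Fin k, x ∈ S ↔ σ₁ x ∈ S := by
      intro x
      refine ⟨hc x, fun hx => ?_⟩
      rw [← himg] at hx
      obtain ⟨w, hw, hwx⟩ := Finset.mem_image.mp hx
      rwa [← σ₁.injective hwx]
    have h2 : ∀ x : Fin k, x ∈ S ↔ σ₂ x ∈ S := by
      intro x
      rw [hSmem, hSmem, orbitOf_eq_of_mem σ₂ (apply_mem_orbitOf σ₂ x)]
    have hstab : ∀ g ∈ Subgroup.closure ({σ₁, σ₂} : Set (Perm (Fin k))),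
        ∀ x : Fin k, x ∈ S ↔ g x ∈ S := by
      intro g hg
      induction hg using Subgroup.closure_induction with
      | mem x hx =>
        rcases hx with rfl | hx
        · exact h1
        · rw [Set.mem_singleton_iff] at hx
          subst hx
          exact h2
      | one => simp
      | mul a b ha hb iha ihb =>
        intro x
        have := (ihb x).trans (iha (b x))
        simpa [Perm.mul_apply] using this
      | inv a ha iha =>
        intro x
        have := iha (a⁻¹ x)
        simp only [Perm.inv_def, Equiv.apply_symm_apply] at this
        exact this.symm
    obtain ⟨x, hx⟩ := hSne
    obtain ⟨y, hy⟩ := hScne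
    obtain ⟨g, hg, hgxy⟩ := htrans x y
    exact hy (hgxy ▸ (hstab g hg x).mp hx)
  obtain ⟨z, hzS, hzS'⟩ := hcross
  -- counting
  set F : Finset (Finset (Fin k)) → Finset (Finset (Fin k)) :=
    fun X => (cyclesOf σ₁).filter fun d => (d ∩ X.biUnion id).Nonempty with hF
  have hcover : cyclesOf σ₁ ⊆ F A ∪ F (cyclesOf σ₂ \ A) := by
    intro c hc
    obtain ⟨x, _, rfl⟩ := Finset.mem_image.mp hc
    by_cases hx : x ∈ S
    · exact Finset.mem_union_left _ (Finset.mem_filter.mpr ⟨hc,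
        x, Finset.mem_inter.mpr ⟨mem_orbitOf_self σ₁ x, hx⟩⟩)
    · exact Finset.mem_union_right _ (Finset.mem_filter.mpr ⟨hc,
        x, Finset.mem_inter.mpr ⟨mem_orbitOf_self σ₁ x, (hsdiff x).mpr hx⟩⟩)
  have hcstar : orbitOf σ₁ z ∈ F A ∩ F (cyclesOf σ₂ \ A) := by
    refine Finset.mem_inter.mpr ⟨?_, ?_⟩
    · exact Finset.mem_filter.mpr ⟨orbitOf_mem_cyclesOf σ₁ z,
        z, Finset.mem_inter.mpr ⟨mem_orbitOf_self σ₁ z, hzS⟩⟩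
    · exact Finset.mem_filter.mpr ⟨orbitOf_mem_cyclesOf σ₁ z,
        σ₁ z, Finset.mem_inter.mpr ⟨apply_mem_orbitOf σ₁ z, (hsdiff (σ₁ z)).mpr hzS'⟩⟩
  have hmeets : (cyclesOf σ₁).card + 1 ≤ meetCount σ₁ A + meetCount σ₁ (cyclesOf σ₂ \ A) := by
    have h1 : (cyclesOf σ₁).card ≤ (F A ∪ F (cyclesOf σ₂ \ A)).card :=
      Finset.card_le_card hcover
    have h2 : 1 ≤ (F A ∩ F (cyclesOf σ₂ \ A)).card :=
      Finset.card_pos.mpr ⟨_, hcstar⟩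
    have h3 : (F A ∪ F (cyclesOf σ₂ \ A)).card + (F A ∩ F (cyclesOf σ₂ \ A)).card
        = (F A).card + (F (cyclesOf σ₂ \ A)).card :=
      Finset.card_union_add_card_inter _ _
    have hm : ∀ X, meetCount σ₁ X = (F X).card := fun X => rfl
    rw [hm, hm]
    omega
  have hws : (∑ c ∈ A, ((q c : ℤ) - 1)) + ∑ c ∈ cyclesOf σ₂ \ A, ((q c : ℤ) - 1)
      = ((cyclesOf σ₁).card : ℤ) := by
    rw [add_comm, Finset.sum_sdiff hA, weight_sum_eq σ₁ σ₂ q hsum]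
  simp only [dFun]
  have hmeets' : ((cyclesOf σ₁).card : ℤ) + 1
      ≤ (meetCount σ₁ A : ℤ) + (meetCount σ₁ (cyclesOf σ₂ \ A) : ℤ) := by
    exact_mod_cast hmeets
  linarith

end Perm

/-- Let `σ₁, σ₂` be permutations of `{1,…,k}` generating a transitive group, and let
`q : C(σ₂) → {2,3,…}` with `∑_{i∈C(σ₂)} q(i) = |C(σ₁)| + |C(σ₂)|`. Then the alternating
chain sum over the family `I` of non-trivial subsets `A ⊂ C(σ₂)` such that at most
`∑_{i∈A} (q(i)-1)` cycles of `σ₁` intersect `⋃A` equals `1` if `I = ∅` and `0` otherwise. -/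
theorem chainSum_badFamily {k : ℕ} (σ₁ σ₂ : Perm (Fin k))
    (htrans : ∀ x y : Fin k,
      ∃ g ∈ Subgroup.closure ({σ₁, σ₂} : Set (Perm (Fin k))), g x = y)
    (q : Finset (Fin k) → ℕ) (hq : ∀ c ∈ cyclesOf σ₂, 2 ≤ q c)
    (hsum : ∑ c ∈ cyclesOf σ₂, q c = (cyclesOf σ₁).card + (cyclesOf σ₂).card) :
    chainSum (badFamily σ₁ σ₂ q)
      = if badFamily σ₁ σ₂ q = ∅ then 1 else 0 := by
  classical
  by_cases hempty : badFamily σ₁ σ₂ q = ∅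
  · rw [if_pos hempty, hempty]
    unfold chainSum
    rw [Finset.powerset_empty, Finset.filter_singleton, if_pos (by simp)]
    simp
  · rw [if_neg hempty]
    set I := badFamily σ₁ σ₂ q with hI
    have hmemI : ∀ A, A ∈ I ↔
        (A ⊆ cyclesOf σ₂ ∧ A.Nonempty ∧ A ≠ cyclesOf σ₂) ∧ dFun σ₁ q A ≤ 0 := by
      intro A
      simp only [hI, badFamily, Finset.mem_filter, Finset.mem_powerset, dFun, sub_nonpos]
      tauto
    have hIne : I.Nonempty := Finset.nonempty_iff_ne_empty.mpr hempty
    -- the domain of proper nonempty subsets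
    set D := (cyclesOf σ₂).powerset.filter
      (fun A => A.Nonempty ∧ A ≠ cyclesOf σ₂) with hD
    have hmemD : ∀ A, A ∈ D ↔ A ⊆ cyclesOf σ₂ ∧ A.Nonempty ∧ A ≠ cyclesOf σ₂ := by
      intro A
      simp [hD, Finset.mem_filter, Finset.mem_powerset]
    have hDne : D.Nonempty := by
      obtain ⟨A, hA⟩ := hIne
      exact ⟨A, (hmemD A).mpr ((hmemI A).mp hA).1⟩
    -- minimizer of dFun over D
    obtain ⟨B, hBD, hBmin⟩ := Finset.exists_min_image D (dFun σ₁ q) hDne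
    set m := dFun σ₁ q B with hm
    -- among minimizers, take one with minimal cardinality
    have hDmne : (D.filter (fun A => dFun σ₁ q A = m)).Nonempty :=
      ⟨B, Finset.mem_filter.mpr ⟨hBD, rfl⟩⟩
    obtain ⟨M, hMDm, hMmin⟩ :=
      Finset.exists_min_image _ (fun A => A.card) hDmne
    obtain ⟨hMD, hMd⟩ := Finset.mem_filter.mp hMDm
    have hMprop := (hmemD M).mp hMD
    -- m ≤ 0
    have hmle : m ≤ 0 := by
      obtain ⟨A, hA⟩ := hIne
      obtain ⟨hAD, hAd⟩ := (hmemI A).mp hA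
      exact le_trans (hBmin A ((hmemD A).mpr hAD)) hAd
    have hMI : M ∈ I := (hmemI M).mpr ⟨hMprop, hMd ▸ hmle⟩
    -- minimality of M: any minimizer contained in M equals M
    have hMminimal : ∀ X, X ∈ D → dFun σ₁ q X = m → X ⊆ M → X = M := by
      intro X hXD hXd hXM
      apply Finset.eq_of_subset_of_card_le hXM
      exact hMmin X (Finset.mem_filter.mpr ⟨hXD, hXd⟩)
    -- the join property
    have hjoin : ∀ A ∈ I, A ∪ M ∈ I := by
      intro A hA
      obtain ⟨⟨hAsub, hAne, hAfull⟩, hAd⟩ := (hmemI A).mp hA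
      have hsubm := dFun_submodular σ₁ q A M
      by_cases hfull : A ∪ M = cyclesOf σ₂
      · exfalso
        have hdfull : dFun σ₁ q (A ∪ M) = 0 := by
          rw [hfull]; exact dFun_full σ₁ σ₂ q hsum
        have hint : dFun σ₁ q (A ∩ M) ≤ m := by
          rw [hdfull] at hsubm; linarith [hMd]
        by_cases hintne : (A ∩ M).Nonempty
        · have hintD : A ∩ M ∈ D := by
            refine (hmemD _).mpr ⟨(Finset.inter_subset_left).trans hAsub, hintne, ?_⟩
            intro h
            exact hAfull (Finset.Subset.antisymm hAsub
              (h ▸ Finset.inter_subset_left))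
          have : dFun σ₁ q (A ∩ M) = m :=
            le_antisymm hint (hBmin _ hintD)
          have hMA : A ∩ M = M := hMminimal _ hintD this Finset.inter_subset_right
          have : M ⊆ A := hMA ▸ Finset.inter_subset_left
          rw [Finset.union_eq_left.mpr this] at hfull
          exact hAfull hfull
        · -- A ∩ M = ∅: then M = cyclesOf σ₂ \ A, contradicting the complement bound
          have hAM : A ∩ M = ∅ := Finset.not_nonempty_iff_eq_empty.mp hintne
          have hMeq : M = cyclesOf σ₂ \ A := by
            apply Finset.Subset.antisymm
            · intro x hx
              refine Finset.mem_sdiff.mpr ⟨hMprop.1 hx, fun hxA => ?_⟩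
              have : x ∈ A ∩ M := Finset.mem_inter.mpr ⟨hxA, hx⟩
              rw [hAM] at this
              exact absurd this (Finset.notMem_empty x)
            · intro x hx
              obtain ⟨hxc, hxA⟩ := Finset.mem_sdiff.mp hx
              have : x ∈ A ∪ M := hfull ▸ hxc
              rcases Finset.mem_union.mp this with h | h
              · exact absurd h hxA
              · exact h
          have hcomp := dFun_compl σ₁ σ₂ q htrans hsum A hAsub hAne hAfull
          rw [← hMeq] at hcomp
          have : dFun σ₁ q M = m := hMd
          linarith
      · -- A ∪ M proper: it lies in I
        have hunionD : A ∪ M ∈ D := by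
          refine (hmemD _).mpr ⟨Finset.union_subset hAsub hMprop.1,
            hAne.mono Finset.subset_union_left, hfull⟩
        have hud : dFun σ₁ q (A ∪ M) ≤ 0 := by
          by_cases hintne : (A ∩ M).Nonempty
          · have hintD : A ∩ M ∈ D := by
              refine (hmemD _).mpr ⟨(Finset.inter_subset_left).trans hAsub, hintne, ?_⟩
              intro h
              exact hAfull (Finset.Subset.antisymm hAsub
                (h ▸ Finset.inter_subset_left))
            have := hBmin _ hintD
            linarith [hMd]
          · have hAM : A ∩ M = ∅ := Finset.not_nonempty_iff_eq_empty.mp hintne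
            rw [hAM, dFun_empty] at hsubm
            linarith [hMd]
        exact (hmemI _).mpr ⟨((hmemD _).mp hunionD), hud⟩
    exact chainSum_eq_zero_of_join I M hMI hjoin
end

section
/- Let G be a finite bipartite graph with white vertices W and black vertices B, and q : B → ℕ with q(j) ≥ 2 for all j. Suppose that for every A ⊆ B, |N_G(A)| ≥ ∑_{j∈A}(q(j)−1), with equality if and only if A is the set of black vertices of a union of connected components of G. Then there exists a strictly positive solution (x_{ij} > 0 on each edge) to the system: ∑_j x_{ij} = 1 for each white vertex i, ∑_i x_{ij} = q(j)−1 for each black vertex j. -/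
open Finset
open scoped Classical

/-- The set `N_G(A)` of white vertices having a neighbor in the black set `A`. -/
noncomputable def nbhd {W B : Type*} [Fintype W] (E : W → B → Prop)
    (A : Finset B) : Finset W :=
  Finset.univ.filter fun i => ∃ j ∈ A, E i j

lemma exists_fn {W B : Type*} [Fintype W] [Fintype B]
    (E : W → B → Prop) (q : B → ℕ) (hq : ∀ j, 2 ≤ q j)
    (hwhite : ∀ i : W, ∃ j : B, E i j)
    (hhall : ∀ A : Finset B, (∑ j ∈ A, ((q j : ℤ) - 1)) ≤ ((nbhd E A).card : ℤ))
    (heq : ∀ A : Finset B,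
      (((nbhd E A).card : ℤ) = ∑ j ∈ A, ((q j : ℤ) - 1)) ↔
        (∀ i ∈ nbhd E A, ∀ j, E i j → j ∈ A))
    (i0 : W) (j0 : B) (h0 : E i0 j0) :
    ∃ f : W → B, (∀ i, E i (f i)) ∧
      (∀ j, (((Finset.univ.filter (fun i => f i = j)).card : ℤ) = (q j : ℤ) - 1)) ∧
      f i0 = j0 := by
  -- total count
  have hW : ((Fintype.card W : ℤ)) = ∑ j : B, ((q j : ℤ) - 1) := by
    have h1 : nbhd E (univ : Finset B) = univ := by
      refine Finset.eq_univ_of_forall fun i => ?_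
      simp only [nbhd, mem_filter, mem_univ, true_and]
      obtain ⟨j, hj⟩ := hwhite i
      exact ⟨j, hj⟩
    have := (heq (univ : Finset B)).2 (fun i _ j _ => mem_univ j)
    rw [h1] at this
    simpa using this
  set cnt : B → ℕ := fun j => if j = j0 then q j - 2 else q j - 1 with hcnt
  have hcnt_cast : ∀ j, (cnt j : ℤ) = (q j : ℤ) - 1 - (if j = j0 then 1 else 0) := by
    intro j
    have := hq j
    simp only [hcnt]
    split_ifs <;> [rw [Nat.cast_sub (by omega)]; rw [Nat.cast_sub (by omega)]] <;> push_cast <;> ring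
  have hcnt_sum : ∀ A : Finset B, (∑ j ∈ A, (cnt j : ℤ))
      = (∑ j ∈ A, ((q j : ℤ) - 1)) - (if j0 ∈ A then 1 else 0) := by
    intro A
    rw [Finset.sum_congr rfl (fun j _ => hcnt_cast j), Finset.sum_sub_distrib,
      Finset.sum_ite_eq' A j0 (fun _ => (1:ℤ))]
  set ι := (Σ j : B, Fin (cnt j)) with hι
  set t : ι → Finset W := fun p => (nbhd E {p.1}).erase i0 with ht
  -- Hall condition
  have hall : ∀ S : Finset ι, S.card ≤ (S.biUnion t).card := by
    intro S
    set A : Finset B := S.image Sigma.fst with hA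
    have hSC : (S.card : ℤ) ≤ ∑ j ∈ A, (cnt j : ℤ) := by
      have hsub : S ⊆ A.sigma (fun j => (univ : Finset (Fin (cnt j)))) := by
        intro p hp
        rw [mem_sigma]
        exact ⟨mem_image_of_mem _ hp, mem_univ _⟩
      have := Finset.card_le_card hsub
      rw [Finset.card_sigma] at this
      exact_mod_cast le_trans (Nat.cast_le.2 this) (by push_cast; simp)
    have hBU : (nbhd E A).erase i0 ⊆ S.biUnion t := by
      intro i hi
      rw [mem_erase] at hi
      obtain ⟨hi0, hi'⟩ := hi
      simp only [nbhd, mem_filter, mem_univ, true_and] at hi'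
      obtain ⟨j, hjA, hij⟩ := hi'
      rw [hA, mem_image] at hjA
      obtain ⟨p, hpS, hpj⟩ := hjA
      refine mem_biUnion.2 ⟨p, hpS, ?_⟩
      rw [ht, mem_erase]
      refine ⟨hi0, ?_⟩
      simp only [nbhd, mem_filter, mem_univ, true_and]
      exact ⟨p.1, mem_singleton_self _, hpj ▸ hij⟩
    have key : ∑ j ∈ A, (cnt j : ℤ) ≤ (((nbhd E A).erase i0).card : ℤ) := by
      rw [hcnt_sum]
      by_cases hmem : i0 ∈ nbhd E A
      · rw [Finset.card_erase_of_mem hmem]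
        by_cases hj0 : j0 ∈ A
        · simp only [hj0, if_pos]
          have := hhall A
          have hcpos : 1 ≤ (nbhd E A).card := Finset.card_pos.2 ⟨i0, hmem⟩
          push_cast [Nat.cast_sub hcpos]
          omega
        · -- strict inequality
          have hne : ¬ (((nbhd E A).card : ℤ) = ∑ j ∈ A, ((q j : ℤ) - 1)) := by
            intro hcontra
            exact hj0 ((heq A).1 hcontra i0 hmem j0 h0)
          have hlt := lt_of_le_of_ne (hhall A) (fun h => hne h.symm)
          have hcpos : 1 ≤ (nbhd E A).card := Finset.card_pos.2 ⟨i0, hmem⟩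
          simp only [hj0, if_neg, not_false_iff]
          push_cast [Nat.cast_sub hcpos]
          omega
      · have hj0 : j0 ∉ A := by
          intro hj0
          exact hmem (by simp only [nbhd, mem_filter, mem_univ, true_and]; exact ⟨j0, hj0, h0⟩)
        rw [Finset.erase_eq_of_notMem hmem]
        simp only [hj0, if_neg, not_false_iff]
        have := hhall A
        omega
    have := Finset.card_le_card hBU
    have : (((nbhd E A).erase i0).card : ℤ) ≤ ((S.biUnion t).card : ℤ) := by exact_mod_cast this
    exact_mod_cast le_trans hSC (le_trans key this)
  obtain ⟨g, hginj, hgmem⟩ := (Finset.all_card_le_biUnion_card_iff_exists_injective t).1 hall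
  -- g p ≠ i0
  have hgne : ∀ p, g p ≠ i0 := fun p => Finset.ne_of_mem_erase (hgmem p)
  have hgE : ∀ p : ι, E (g p) p.1 := by
    intro p
    have := Finset.mem_of_mem_erase (hgmem p)
    simp only [nbhd, mem_filter, mem_univ, true_and] at this
    obtain ⟨j, hj, hEj⟩ := this
    rwa [mem_singleton.1 hj] at hEj
  -- cardinalities
  have hcard_ι : (Fintype.card ι : ℤ) = (Fintype.card W : ℤ) - 1 := by
    rw [hW]
    have : Fintype.card ι = ∑ j : B, cnt j := by
      simp [hι, Fintype.card_sigma]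
    rw [this]
    push_cast
    rw [show (∑ j : B, (cnt j : ℤ)) = _ from hcnt_sum univ]
    simp
  -- image of g is univ.erase i0
  have himg : Finset.image g univ = (univ : Finset W).erase i0 := by
    apply Finset.eq_of_subset_of_card_le
    · intro i hi
      rw [mem_image] at hi
      obtain ⟨p, _, hp⟩ := hi
      rw [mem_erase]
      exact ⟨hp ▸ hgne p, mem_univ i⟩
    · rw [Finset.card_erase_of_mem (mem_univ i0), Finset.card_image_of_injective _ hginj]
      simp only [Finset.card_univ]
      omega
  -- define f
  set f : W → B := fun i => if hi : ∃ p : ι, g p = i then (Classical.choose hi).1 else j0 with hf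
  have hfi0 : f i0 = j0 := by
    rw [hf]
    simp only
    rw [dif_neg]
    rintro ⟨p, hp⟩
    exact hgne p hp
  have hfval : ∀ (p : ι), f (g p) = p.1 := by
    intro p
    have hi : ∃ p' : ι, g p' = g p := ⟨p, rfl⟩
    rw [hf]
    simp only [dif_pos hi]
    rw [hginj (Classical.choose_spec hi)]
  have hfE : ∀ i, E i (f i) := by
    intro i
    by_cases hii : i = i0
    · rw [hii, hfi0]; exact h0
    · have hi : i ∈ Finset.image g univ := by
        rw [himg, mem_erase]; exact ⟨hii, mem_univ i⟩
      rw [mem_image] at hi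
      obtain ⟨p, _, hp⟩ := hi
      rw [← hp, hfval]
      exact hgE p
  -- fibers
  have hfiber : ∀ j : B, (Finset.univ.filter (fun i => f i = j))
      = (if j = j0 then insert i0 (Finset.image (fun k : Fin (cnt j) => g ⟨j, k⟩) univ)
         else Finset.image (fun k : Fin (cnt j) => g ⟨j, k⟩) univ) := by
    intro j
    ext i
    simp only [mem_filter, mem_univ, true_and]
    constructor
    · intro hij
      by_cases hii : i = i0
      · rw [hii, hfi0] at hij
        rw [if_pos hij.symm, hii]
        exact mem_insert_self _ _
      · have hi : i ∈ Finset.image g univ := by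
          rw [himg, mem_erase]; exact ⟨hii, mem_univ i⟩
        rw [mem_image] at hi
        obtain ⟨p, _, hp⟩ := hi
        have hp1 : p.1 = j := by rw [← hp, hfval] at hij; exact hij
        have hmem : i ∈ Finset.image (fun k : Fin (cnt j) => g ⟨j, k⟩) univ := by
          subst hp1
          exact mem_image.2 ⟨p.2, mem_univ _, by rw [Sigma.eta]; exact hp⟩
        split_ifs
        · exact mem_insert_of_mem hmem
        · exact hmem
    · intro hmem
      split_ifs at hmem with hjj
      · rcases mem_insert.1 hmem with h | h
        · rw [h, hfi0, hjj]
        · rw [mem_image] at h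
          obtain ⟨k, _, hk⟩ := h
          rw [← hk, hfval]
      · rw [mem_image] at hmem
        obtain ⟨k, _, hk⟩ := hmem
        rw [← hk, hfval]
  have hfibercard : ∀ j, (((Finset.univ.filter (fun i => f i = j)).card : ℤ) = (q j : ℤ) - 1) := by
    intro j
    rw [hfiber j]
    have hinj : Function.Injective (fun k : Fin (cnt j) => g ⟨j, k⟩) := by
      intro k k' hkk
      exact eq_of_heq (Sigma.mk.inj_iff.1 (hginj hkk)).2
    have hcardimg : (Finset.image (fun k : Fin (cnt j) => g ⟨j, k⟩) univ).card = cnt j := by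
      rw [Finset.card_image_of_injective _ hinj, Finset.card_univ, Fintype.card_fin]
    split_ifs with hjj
    · have hnotmem : i0 ∉ Finset.image (fun k : Fin (cnt j) => g ⟨j, k⟩) univ := by
        rw [mem_image]
        rintro ⟨k, _, hk⟩
        exact hgne _ hk
      rw [Finset.card_insert_of_notMem hnotmem, hcardimg]
      have hc := hcnt_cast j
      rw [if_pos hjj] at hc
      push_cast
      omega
    · rw [hcardimg]
      have hc := hcnt_cast j
      rw [if_neg hjj] at hc
      omega
  exact ⟨f, hfE, hfibercard, hfi0⟩

/-- Let `G` be a finite bipartite graph with white part `W` and black part `B` (every white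
vertex lying on some edge) and `q : B → ℕ` with `q(j) ≥ 2`. Suppose that for every `A ⊆ B`
one has `|N_G(A)| ≥ ∑_{j∈A}(q(j)−1)`, with equality if and only if `A` is the set of black
vertices of a union of connected components of `G` (equivalently: there is no edge between
`N_G(A)` and `B∖A`). Then there is a strictly positive solution of the transportation
system: row sums `1` at white vertices and column sums `q(j) − 1` at black vertices. -/
theorem q_admissible_implies_transportation {W B : Type*} [Fintype W] [Fintype B]
    (E : W → B → Prop) (q : B → ℕ) (hq : ∀ j, 2 ≤ q j)
    (hwhite : ∀ i : W, ∃ j : B, E i j)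
    (hhall : ∀ A : Finset B, (∑ j ∈ A, ((q j : ℤ) - 1)) ≤ ((nbhd E A).card : ℤ))
    (heq : ∀ A : Finset B,
      (((nbhd E A).card : ℤ) = ∑ j ∈ A, ((q j : ℤ) - 1)) ↔
        (∀ i ∈ nbhd E A, ∀ j, E i j → j ∈ A)) :
    ∃ x : W → B → ℝ,
      (∀ i j, E i j → 0 < x i j) ∧
      (∀ i, ∑ j ∈ Finset.univ.filter (fun j => E i j), x i j = 1) ∧
      (∀ j, ∑ i ∈ Finset.univ.filter (fun i => E i j), x i j = (q j : ℝ) - 1) := by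
  set edges : Finset (W × B) := Finset.univ.filter (fun p => E p.1 p.2) with hedges
  by_cases hne : edges.Nonempty
  · -- the main case
    have hex : ∀ p : W × B, E p.1 p.2 → ∃ f : W → B, (∀ i', E i' (f i')) ∧
        (∀ j', (((Finset.univ.filter (fun i' => f i' = j')).card : ℤ) = (q j' : ℤ) - 1)) ∧
        f p.1 = p.2 := fun p h => exists_fn E q hq hwhite hhall heq p.1 p.2 h
    set G : W × B → W → B := fun p =>
      if h : E p.1 p.2 then (hex p h).choose else fun i' => (hwhite i').choose with hG
    have hGp : ∀ p ∈ edges, (∀ i', E i' (G p i')) ∧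
        (∀ j', (((Finset.univ.filter (fun i' => G p i' = j')).card : ℤ) = (q j' : ℤ) - 1)) ∧
        G p p.1 = p.2 := by
      intro p hp
      have h : E p.1 p.2 := by rw [hedges, mem_filter] at hp; exact hp.2
      rw [hG]
      simp only [dif_pos h]
      exact (hex p h).choose_spec
    set m : ℝ := (edges.card : ℝ) with hm
    have hm0 : 0 < m := by
      rw [hm]
      exact_mod_cast Finset.card_pos.2 hne
    refine ⟨fun i j => (∑ p ∈ edges, if G p i = j then (1:ℝ) else 0) / m, ?_, ?_, ?_⟩
    · intro i j hij
      apply div_pos _ hm0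
      have hmem : (i, j) ∈ edges := by
        rw [hedges, mem_filter]; exact ⟨mem_univ _, hij⟩
      refine Finset.sum_pos' (fun p _ => by positivity) ⟨(i, j), hmem, ?_⟩
      rw [if_pos ((hGp (i, j) hmem).2.2)]
      norm_num
    · intro i
      rw [← Finset.sum_div, Finset.sum_comm]
      rw [Finset.sum_congr rfl (fun p hp => ?_), Finset.sum_const, nsmul_eq_mul, mul_one,
        ← hm, div_self (ne_of_gt hm0)]
      -- inner sum = 1
      have hmem : G p i ∈ Finset.univ.filter (fun j => E i j) := by
        rw [mem_filter]; exact ⟨mem_univ _, (hGp p hp).1 i⟩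
      rw [show (∑ j ∈ Finset.univ.filter (fun j => E i j), if G p i = j then (1:ℝ) else 0)
          = ∑ j ∈ Finset.univ.filter (fun j => E i j), if j = G p i then (1:ℝ) else 0 from
        Finset.sum_congr rfl (fun j _ => by simp [eq_comm])]
      rw [Finset.sum_ite_eq' _ _ (fun _ => (1:ℝ)), if_pos hmem]
    · intro j
      rw [← Finset.sum_div, Finset.sum_comm]
      rw [Finset.sum_congr rfl (fun p hp => ?_), Finset.sum_const, nsmul_eq_mul,
        ← hm, mul_comm, mul_div_assoc, div_self (ne_of_gt hm0), mul_one]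
      -- inner sum = q j - 1
      have hsum : (∑ i ∈ Finset.univ.filter (fun i => E i j), if G p i = j then (1:ℝ) else 0)
          = ∑ i : W, if G p i = j then (1:ℝ) else 0 := by
        refine Finset.sum_subset (Finset.filter_subset _ _) (fun i _ hi => ?_)
        rw [mem_filter, not_and] at hi
        rw [if_neg]
        intro hGij
        exact hi (mem_univ i) (hGij ▸ (hGp p hp).1 i)
      rw [hsum, Finset.sum_boole]
      exact_mod_cast (hGp p hp).2.1 j
  · -- degenerate case: no edges → W and B are empty
    have hWempty : IsEmpty W := by
      by_contra h
      rw [not_isEmpty_iff] at h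
      obtain ⟨i⟩ := h
      obtain ⟨j, hj⟩ := hwhite i
      exact hne ⟨(i, j), by rw [hedges, mem_filter]; exact ⟨mem_univ _, hj⟩⟩
    have hBempty : IsEmpty B := by
      by_contra h
      rw [not_isEmpty_iff] at h
      obtain ⟨j⟩ := h
      have h1 := hhall {j}
      have h2 : (nbhd E {j}).card = 0 := by
        simp [Finset.card_eq_zero, Finset.eq_empty_of_isEmpty]
      rw [h2] at h1
      have := hq j
      simp only [Finset.sum_singleton] at h1
      omega
    exact ⟨0, fun i => (hWempty.false i).elim, fun i => (hWempty.false i).elim,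
      fun j => (hBempty.false j).elim⟩
end

section
/- Let σ₁, σ₂ ∈ S(k) generate a group acting transitively on {1,…,k}, and let 𝒱 be the bipartite graph with vertex set C(σ₁) ⊔ C(σ₂) and an edge between intersecting cycles. Suppose there is an edge e of 𝒱 whose removal disconnects 𝒱 into two components each containing at least one vertex of C(σ₂). Then for every coloring q : C(σ₂) → {2,3,…} there exists a non-trivial subset A ⊂ C(σ₂) (A ≠ ∅, A ≠ C(σ₂)) such that at most ∑_{i∈A}(q(i)−1) cycles of σ₁ intersect ⋃A, or the marriage counting fails; i.e., the triple (σ₁,σ₂,q) never satisfies condition (e) of the main theorem. -/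
open Finset Equiv
open scoped Classical

/-- The bipartite graph `𝒱^{σ₁,σ₂}` on `C(σ₁) ⊔ C(σ₂)` with edges between
intersecting cycles; left summands are cycles of `σ₁` (white), right summands are
cycles of `σ₂` (black). -/
noncomputable def interGraph {k : ℕ} (σ₁ σ₂ : Perm (Fin k)) :
    SimpleGraph (Finset (Fin k) ⊕ Finset (Fin k)) :=
  SimpleGraph.fromRel fun x y =>
    ∃ a b, x = Sum.inl a ∧ y = Sum.inr b ∧
      a ∈ cyclesOf σ₁ ∧ b ∈ cyclesOf σ₂ ∧ (a ∩ b).Nonempty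

/-- Suppose `σ₁, σ₂ ∈ S(k)` generate a transitive group and the graph `𝒱^{σ₁,σ₂}` has a
disconnecting edge `e = {i, j}` (with `i ∈ C(σ₁)`, `j ∈ C(σ₂)`) whose removal separates
`i` from `j` and whose two resulting components each contain a vertex of `C(σ₂)`. Then for
every coloring `q : C(σ₂) → {2,3,…}` with `∑ q(c) = |C(σ₁)| + |C(σ₂)|` condition (e) fails:
there is a non-trivial `A ⊂ C(σ₂)` such that at most `∑_{i∈A}(q(i)−1)` cycles of `σ₁`
intersect `⋃A`. -/
theorem bridge_implies_not_condition_e {k : ℕ} (σ₁ σ₂ : Perm (Fin k))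
    (htrans : ∀ x y : Fin k,
      ∃ g ∈ Subgroup.closure ({σ₁, σ₂} : Set (Perm (Fin k))), g x = y)
    (i j : Finset (Fin k)) (hi : i ∈ cyclesOf σ₁) (hj : j ∈ cyclesOf σ₂)
    (hedge : (i ∩ j).Nonempty)
    (hdisc : ¬ ((interGraph σ₁ σ₂).deleteEdges
        {s(Sum.inl i, Sum.inr j)}).Reachable (Sum.inl i) (Sum.inr j))
    (hblack : ∃ j' ∈ cyclesOf σ₂, ((interGraph σ₁ σ₂).deleteEdges
        {s(Sum.inl i, Sum.inr j)}).Reachable (Sum.inl i) (Sum.inr j'))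
    (q : Finset (Fin k) → ℕ) (hq : ∀ c ∈ cyclesOf σ₂, 2 ≤ q c)
    (hsum : ∑ c ∈ cyclesOf σ₂, q c = (cyclesOf σ₁).card + (cyclesOf σ₂).card) :
    ∃ A ⊆ cyclesOf σ₂, A.Nonempty ∧ A ≠ cyclesOf σ₂ ∧
      (meetCount σ₁ A : ℤ) ≤ ∑ c ∈ A, ((q c : ℤ) - 1) := by
  classical
  set G' := (interGraph σ₁ σ₂).deleteEdges {s(Sum.inl i, Sum.inr j)} with hG'
  obtain ⟨j', hj'mem, hj'reach⟩ := hblack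
  -- adjacency in the deleted graph
  have hadj : ∀ d b : Finset (Fin k), d ∈ cyclesOf σ₁ → b ∈ cyclesOf σ₂ →
      (d ∩ b).Nonempty → ¬(d = i ∧ b = j) →
      G'.Adj (Sum.inl d) (Sum.inr b) := by
    intro d b hd hb hne hnot
    rw [hG', SimpleGraph.deleteEdges_adj]
    constructor
    · rw [interGraph, SimpleGraph.fromRel_adj]
      exact ⟨by simp, Or.inl ⟨d, b, rfl, rfl, hd, hb, hne⟩⟩
    · intro hmem
      simp only [Set.mem_singleton_iff, Sym2.eq, Sym2.rel_iff', Prod.mk.injEq,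
        Prod.swap_prod_mk] at hmem
      rcases hmem with ⟨h1, h2⟩ | ⟨h1, h2⟩
      · exact hnot ⟨Sum.inl.inj h1, Sum.inr.inj h2⟩
      · exact Sum.inl_ne_inr h1
  set B1 := (cyclesOf σ₂).filter (fun b => G'.Reachable (Sum.inl i) (Sum.inr b)) with hB1
  set B2 := (cyclesOf σ₂).filter (fun b => ¬ G'.Reachable (Sum.inl i) (Sum.inr b)) with hB2
  set W1 := (cyclesOf σ₁).filter (fun w => G'.Reachable (Sum.inl i) (Sum.inl w)) with hW1
  set W2 := (cyclesOf σ₁).filter (fun w => ¬ G'.Reachable (Sum.inl i) (Sum.inl w)) with hW2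
  have hjB2 : j ∈ B2 := by simp [hB2, hj, hdisc]
  have hj'B1 : j' ∈ B1 := by simp [hB1, hj'mem, hj'reach]
  have hjnB1 : j ∉ B1 := by simp [hB1, hdisc]
  have hj'nB2 : j' ∉ B2 := by simp [hB2, hj'reach, hj'mem]
  have hiW1 : i ∈ W1 := Finset.mem_filter.mpr ⟨hi, SimpleGraph.Reachable.refl _⟩
  -- first meet bound
  have hmeet1 : meetCount σ₁ B1 ≤ W1.card := by
    apply Finset.card_le_card
    intro d hd
    rw [Finset.mem_filter] at hd
    obtain ⟨hd1, x, hx⟩ := hd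
    rw [Finset.mem_inter] at hx
    obtain ⟨hxd, hxA⟩ := hx
    obtain ⟨b, hbB1, hxb⟩ := Finset.mem_biUnion.mp hxA
    have hbne : b ≠ j := fun h => hjnB1 (h ▸ hbB1)
    rw [hB1, Finset.mem_filter] at hbB1
    have hadj' := hadj d b hd1 hbB1.1 ⟨x, Finset.mem_inter.mpr ⟨hxd, hxb⟩⟩
      (fun h => hbne h.2)
    rw [hW1, Finset.mem_filter]
    exact ⟨hd1, hbB1.2.trans hadj'.symm.reachable⟩
  -- second meet bound
  have hmeet2 : meetCount σ₁ B2 ≤ W2.card + 1 := by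
    have hsub : ((cyclesOf σ₁).filter fun d => (d ∩ B2.biUnion id).Nonempty)
        ⊆ insert i W2 := by
      intro d hd
      rw [Finset.mem_filter] at hd
      obtain ⟨hd1, x, hx⟩ := hd
      rw [Finset.mem_inter] at hx
      obtain ⟨hxd, hxA⟩ := hx
      obtain ⟨b, hbB2, hxb⟩ := Finset.mem_biUnion.mp hxA
      rw [hB2, Finset.mem_filter] at hbB2
      by_cases hdi : d = i
      · exact Finset.mem_insert.mpr (Or.inl hdi)
      · have hadj' := hadj d b hd1 hbB2.1 ⟨x, Finset.mem_inter.mpr ⟨hxd, hxb⟩⟩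
          (fun h => hdi h.1)
        refine Finset.mem_insert.mpr (Or.inr ?_)
        rw [hW2, Finset.mem_filter]
        refine ⟨hd1, fun hreach => hbB2.2 (hreach.trans hadj'.reachable)⟩
    calc meetCount σ₁ B2 ≤ (insert i W2).card := Finset.card_le_card hsub
      _ ≤ W2.card + 1 := Finset.card_insert_le _ _
  -- cardinality and sum identities
  have hWcard : W1.card + W2.card = (cyclesOf σ₁).card :=
    Finset.card_filter_add_card_filter_not _
  have hBsum : (∑ c ∈ B1, ((q c : ℤ) - 1)) + (∑ c ∈ B2, ((q c : ℤ) - 1))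
      = ∑ c ∈ cyclesOf σ₂, ((q c : ℤ) - 1) :=
    Finset.sum_filter_add_sum_filter_not _ _ _
  have htotal : ∑ c ∈ cyclesOf σ₂, ((q c : ℤ) - 1) = (cyclesOf σ₁).card := by
    rw [Finset.sum_sub_distrib, Finset.sum_const, nsmul_eq_mul, mul_one]
    have : (∑ c ∈ cyclesOf σ₂, (q c : ℤ)) = ((∑ c ∈ cyclesOf σ₂, q c : ℕ) : ℤ) := by
      push_cast; ring
    rw [this, hsum]
    push_cast
    ring
  by_cases hcase : (meetCount σ₁ B1 : ℤ) ≤ ∑ c ∈ B1, ((q c : ℤ) - 1)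
  · exact ⟨B1, Finset.filter_subset _ _, ⟨j', hj'B1⟩,
      fun h => hjnB1 (h ▸ hj), hcase⟩
  · refine ⟨B2, Finset.filter_subset _ _, ⟨j, hjB2⟩,
      fun h => hj'nB2 (h ▸ hj'mem), ?_⟩
    push_neg at hcase
    have h1 : (meetCount σ₁ B1 : ℤ) ≤ (W1.card : ℤ) := by exact_mod_cast hmeet1
    have h2 : (meetCount σ₁ B2 : ℤ) ≤ (W2.card : ℤ) + 1 := by exact_mod_cast hmeet2
    have h3 : (W1.card : ℤ) + W2.card = (cyclesOf σ₁).card := by exact_mod_cast hWcard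
    linarith
end

section
/- Let ν be a compactly supported probability measure on ℝ with Cauchy transform G(z) = ∑_{n≥0} M_n z^{-(n+1)}, log-coefficients S_n defined by log(zG(z)) = ∑_{n≥1} S_n z^{-n}, and free cumulants R_n defined by G^{⟨-1⟩}(z) = 1/z + ∑_{n≥1} R_n z^{n-1}. Then for every n ≥ 1, S_n = ∑_{l≥1} (1/l!) (n−1)_{l−1} ∑_{k₁+⋯+k_l=n, k_i≥1} R_{k₁}⋯R_{k_l}, where (a)_b denotes the falling factorial a(a−1)⋯(a−b+1). -/
open Finset PowerSeries

/-- `compSum R l n = ∑_{k₁+⋯+k_l = n, kᵢ ≥ 1} R_{k₁} ⋯ R_{k_l}`: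
the sum over compositions of `n` into `l` positive parts of products of `R`'s. -/
noncomputable def compSum (R : ℕ → ℝ) (l n : ℕ) : ℝ :=
  ∑ c ∈ (Finset.Nat.antidiagonalTuple l n).filter (fun c => ∀ i, 1 ≤ c i),
    ∏ i, R (c i)

namespace SRaux

/-- Substitution of a power series `φ` (implicitly of the form `X * A`, so with zero
constant term) into a power series `K`, defined coefficientwise by truncated sums. -/
noncomputable def pcomp (K φ : PowerSeries ℝ) : PowerSeries ℝ :=
  PowerSeries.mk fun m => ∑ i ∈ Finset.range (m + 1), coeff i K * coeff m (φ ^ i)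

lemma coeff_XA_pow (A : PowerSeries ℝ) {m i : ℕ} (h : m < i) : coeff m ((X * A) ^ i) = 0 := by
  rw [mul_pow, coeff_X_pow_mul', if_neg (by omega)]

lemma coeff_pcomp (K φ : PowerSeries ℝ) (m : ℕ) :
    coeff m (pcomp K φ) = ∑ i ∈ range (m + 1), coeff i K * coeff m (φ ^ i) :=
  coeff_mk _ _

lemma coeff_eval₂ (A : PowerSeries ℝ) (P : Polynomial ℝ) (m : ℕ) :
    coeff m (P.eval₂ C (X * A)) =
      ∑ i ∈ range (m + 1), P.coeff i * coeff m ((X * A) ^ i) := by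
  rw [Polynomial.eval₂_eq_sum_range' (n := max (m + 1) (P.natDegree + 1))
      C (by omega) (X * A), map_sum]
  rw [← Finset.sum_subset (Finset.range_subset_range.mpr (le_max_left (m+1) _))]
  · exact Finset.sum_congr rfl fun i _ => by rw [coeff_C_mul]
  · intro i _ hi
    rw [coeff_C_mul, coeff_XA_pow A (by simp at hi ⊢; omega), mul_zero]

lemma coeff_pcomp_eq (A : PowerSeries ℝ) {K : PowerSeries ℝ} {P : Polynomial ℝ} {m : ℕ}
    (h : ∀ i ≤ m, P.coeff i = coeff i K) :
    coeff m (pcomp K (X * A)) = coeff m (P.eval₂ C (X * A)) := by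
  rw [coeff_pcomp, coeff_eval₂]
  exact Finset.sum_congr rfl fun i hi => by rw [h i (by simp at hi; omega)]

lemma pcomp_one (A : PowerSeries ℝ) : pcomp 1 (X * A) = 1 := by
  ext m
  rw [coeff_pcomp, Finset.sum_eq_single 0]
  · simp
  · intro i _ hi
    rw [PowerSeries.coeff_one, if_neg hi, zero_mul]
  · simp

lemma pcomp_mul (A K L : PowerSeries ℝ) :
    pcomp (K * L) (X * A) = pcomp K (X * A) * pcomp L (X * A) := by
  ext m
  set P := trunc (m + 1) K with hP
  set Q := trunc (m + 1) L with hQ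
  have hK : ∀ i ≤ m, P.coeff i = coeff i K := fun i hi => by
    rw [hP, coeff_trunc, if_pos (by omega)]
  have hL : ∀ i ≤ m, Q.coeff i = coeff i L := fun i hi => by
    rw [hQ, coeff_trunc, if_pos (by omega)]
  have hKL : ∀ i ≤ m, (P * Q).coeff i = coeff i (K * L) := by
    intro i hi
    rw [Polynomial.coeff_mul, PowerSeries.coeff_mul]
    refine Finset.sum_congr rfl fun pq hpq => ?_
    rw [Finset.HasAntidiagonal.mem_antidiagonal] at hpq
    rw [hK pq.1 (by omega), hL pq.2 (by omega)]
  rw [coeff_pcomp_eq A hKL, Polynomial.eval₂_mul, PowerSeries.coeff_mul, PowerSeries.coeff_mul]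
  refine Finset.sum_congr rfl fun pq hpq => ?_
  rw [Finset.HasAntidiagonal.mem_antidiagonal] at hpq
  rw [coeff_pcomp_eq A (fun i hi => hK i (by omega)),
      coeff_pcomp_eq A (fun i hi => hL i (by omega))]

lemma pcomp_pow (A K : PowerSeries ℝ) (j : ℕ) :
    pcomp (K ^ j) (X * A) = pcomp K (X * A) ^ j := by
  induction j with
  | zero => simpa using pcomp_one A
  | succ j ih => rw [pow_succ, pow_succ, pcomp_mul, ih]

lemma deriv_eval₂ (φ : PowerSeries ℝ) (P : Polynomial ℝ) :
    d⁄dX ℝ (P.eval₂ C φ) = (Polynomial.derivative P).eval₂ C φ * d⁄dX ℝ φ := by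
  induction P using Polynomial.induction_on' with
  | add p q hp hq =>
      rw [Polynomial.eval₂_add, map_add, hp, hq, Polynomial.derivative_add, Polynomial.eval₂_add,
        add_mul]
  | monomial k a =>
      rw [Polynomial.eval₂_monomial, Polynomial.derivative_monomial, Polynomial.eval₂_monomial]
      rw [Derivation.leibniz, Derivation.leibniz_pow, PowerSeries.derivative_C, smul_zero,
        add_zero]
      simp only [smul_eq_mul, nsmul_eq_mul, map_mul, map_natCast]
      ring

lemma deriv_pcomp (A K : PowerSeries ℝ) :
    d⁄dX ℝ (pcomp K (X * A)) = pcomp (d⁄dX ℝ K) (X * A) * d⁄dX ℝ (X * A) := by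
  ext m
  set P := trunc (m + 2) K with hP
  have hK : ∀ i ≤ m + 1, P.coeff i = coeff i K := fun i hi => by
    rw [hP, coeff_trunc, if_pos (by omega)]
  have hdK : ∀ i ≤ m, (Polynomial.derivative P).coeff i = coeff i (d⁄dX ℝ K) := by
    intro i hi
    rw [Polynomial.coeff_derivative, PowerSeries.coeff_derivative, hK (i+1) (by omega)]
  have h1 : coeff m (d⁄dX ℝ (pcomp K (X * A))) = coeff m (d⁄dX ℝ (P.eval₂ C (X * A))) := by
    rw [PowerSeries.coeff_derivative, PowerSeries.coeff_derivative,
      coeff_pcomp_eq A (fun i hi => hK i hi)]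
  rw [h1, deriv_eval₂, PowerSeries.coeff_mul, PowerSeries.coeff_mul]
  refine Finset.sum_congr rfl fun pq hpq => ?_
  rw [Finset.HasAntidiagonal.mem_antidiagonal] at hpq
  rw [coeff_pcomp_eq A (fun i hi => hdK i (by omega))]

lemma coeff_pcomp_mul (A K Z : PowerSeries ℝ) (n : ℕ) (hn : 1 ≤ n) :
    coeff (n - 1) (pcomp K (X * A) * Z) =
      ∑ j ∈ range n, coeff j K * coeff (n - 1) ((X * A) ^ j * Z) := by
  rw [PowerSeries.coeff_mul]
  have h1 : ∀ pq ∈ antidiagonal (n - 1),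
      coeff pq.1 (pcomp K (X * A)) * coeff pq.2 Z
        = ∑ j ∈ range n, coeff j K * (coeff pq.1 ((X * A) ^ j) * coeff pq.2 Z) := by
    intro pq hpq
    rw [Finset.HasAntidiagonal.mem_antidiagonal] at hpq
    rw [coeff_pcomp, ← Finset.sum_subset (Finset.range_subset_range.mpr (show pq.1 + 1 ≤ n by omega))]
    · rw [Finset.sum_mul]
      exact Finset.sum_congr rfl fun i _ => by ring
    · intro i hi hni
      simp only [Finset.mem_range] at hi hni
      rw [coeff_XA_pow A (by omega)]
      ring
  rw [Finset.sum_congr rfl h1, Finset.sum_comm]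
  refine Finset.sum_congr rfl fun j _ => ?_
  rw [PowerSeries.coeff_mul, Finset.mul_sum]

/-- The key Lagrange-inversion-style residue computation. -/
lemma key (A : PowerSeries ℝ) (hA : constantCoeff A = 1) (K : PowerSeries ℝ) (n : ℕ)
    (hn : 1 ≤ n) :
    coeff (n - 1) (pcomp K (X * A) * (d⁄dX ℝ (X * A) * A⁻¹ ^ n)) = coeff (n - 1) K := by
  have hA0 : constantCoeff A ≠ 0 := by rw [hA]; norm_num
  have hAI : A * A⁻¹ = 1 := PowerSeries.mul_inv_cancel A hA0
  have hk : ∀ k : ℕ, A ^ k * A⁻¹ ^ k = 1 := fun k => by rw [← mul_pow, hAI, one_pow]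
  have hdφ : d⁄dX ℝ (X * A) = X * d⁄dX ℝ A + A := by
    rw [Derivation.leibniz, PowerSeries.derivative_X, smul_eq_mul, smul_eq_mul, mul_one]
  rw [coeff_pcomp_mul A K _ n hn]
  have key1 : ∀ j ∈ range n,
      coeff (n - 1) ((X * A) ^ j * (d⁄dX ℝ (X * A) * A⁻¹ ^ n)) =
        if j = n - 1 then 1 else 0 := by
    intro j hj
    rw [Finset.mem_range] at hj
    rcases eq_or_ne j (n - 1) with hje | hje
    · subst hje
      rw [if_pos rfl]
      obtain ⟨p, rfl⟩ : ∃ p, n = p + 1 := ⟨n - 1, by omega⟩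
      have hsimp : (p + 1) - 1 = p := by omega
      rw [hsimp]
      have hW : (X * A) ^ p * (d⁄dX ℝ (X * A) * A⁻¹ ^ (p + 1))
          = X ^ p * (A⁻¹ * d⁄dX ℝ (X * A)) := by
        rw [mul_pow]
        linear_combination (X ^ p * A⁻¹ * d⁄dX ℝ (X * A)) * hk p
      rw [hW, PowerSeries.coeff_X_pow_mul', if_pos (le_refl p), Nat.sub_self, hdφ]
      rw [coeff_zero_eq_constantCoeff, map_mul, map_add, map_mul,
        PowerSeries.constantCoeff_X, zero_mul, zero_add, hA,
        PowerSeries.constantCoeff_inv, hA]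
      norm_num
    · rw [if_neg hje]
      obtain ⟨k, rfl⟩ : ∃ k, n = j + k + 2 := ⟨n - j - 2, by omega⟩
      have hW : (X * A) ^ j * (d⁄dX ℝ (X * A) * A⁻¹ ^ (j + k + 2))
          = X ^ j * (X * (A⁻¹ ^ (k + 2) * d⁄dX ℝ A) + A⁻¹ ^ (k + 1)) := by
        rw [mul_pow, hdφ]
        linear_combination (X ^ j * X * d⁄dX ℝ A * A⁻¹ ^ (k + 2)) * hk j
          + (X ^ j * A⁻¹ ^ (k + 1)) * hk (j + 1)
      have hidx : j + k + 2 - 1 = (k + 1) + j := by omega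
      rw [hW, hidx, PowerSeries.coeff_X_pow_mul, map_add, coeff_succ_X_mul]
      have hd0 : A ^ (k + 1) • d⁄dX ℝ (A⁻¹ ^ (k + 1)) + A⁻¹ ^ (k + 1) • d⁄dX ℝ (A ^ (k + 1))
          = 0 := by
        have := congrArg (d⁄dX ℝ) (hk (k + 1))
        rwa [Derivation.leibniz, Derivation.map_one_eq_zero] at this
      simp only [Derivation.leibniz_pow, smul_eq_mul, nsmul_eq_mul, Nat.add_sub_cancel,
        Nat.cast_add, Nat.cast_one] at hd0
      have hAk0 : (A : ℝ⟦X⟧) ^ (k + 1) ≠ 0 := by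
        intro h
        have := congrArg (constantCoeff) h
        rw [map_pow, hA, one_pow, map_zero] at this
        norm_num at this
      have ht' : ((k : ℝ⟦X⟧) + 1) * (A⁻¹ ^ (k + 2) * d⁄dX ℝ A) = - d⁄dX ℝ (A⁻¹ ^ (k + 1)) := by
        apply mul_right_cancel₀ hAk0
        rw [Derivation.leibniz_pow]
        simp only [smul_eq_mul, nsmul_eq_mul, Nat.add_sub_cancel, Nat.cast_add, Nat.cast_one]
        linear_combination hd0 + (((k : ℝ⟦X⟧) + 1) * d⁄dX ℝ A * A⁻¹) * hk (k + 1)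
          - (((k : ℝ⟦X⟧) + 1) * d⁄dX ℝ A * A⁻¹) * hk k
      have hC : ((k : ℝ⟦X⟧) + 1) = PowerSeries.C ((k : ℝ) + 1) := by
        rw [map_add, map_one, map_natCast]
      have hco := congrArg (coeff k) ht'
      rw [hC, coeff_C_mul, map_neg, PowerSeries.coeff_derivative] at hco
      have hk0 : ((k : ℝ) + 1) ≠ 0 := by positivity
      have heq : coeff k (A⁻¹ ^ (k + 2) * d⁄dX ℝ A) = - coeff (k + 1) (A⁻¹ ^ (k + 1)) := by
        apply mul_left_cancel₀ hk0
        rw [hco]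
        ring
      rw [heq]
      ring
  calc ∑ j ∈ range n, coeff j K * coeff (n - 1) ((X * A) ^ j * (d⁄dX ℝ (X * A) * A⁻¹ ^ n))
      = ∑ j ∈ range n, (if j = n - 1 then coeff j K else 0) := by
        refine Finset.sum_congr rfl fun j hj => ?_
        rw [key1 j hj]
        split <;> ring
    _ = coeff (n - 1) K := by
        rw [Finset.sum_ite_eq' (range n) (n - 1) (fun j => coeff j K),
          if_pos (Finset.mem_range.mpr (by omega))]

lemma coeff_B_pow (R : ℕ → ℝ) (l n : ℕ) :
    coeff n ((PowerSeries.mk fun k => if k = 0 then 0 else R k) ^ l) = compSum R l n := by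
  set B := PowerSeries.mk fun k => if k = 0 then (0:ℝ) else R k with hB
  have hBc : ∀ k, coeff k B = if k = 0 then 0 else R k := fun k => coeff_mk _ _
  rw [PowerSeries.coeff_pow]
  have stepA : ∑ f ∈ finsuppAntidiag (range l) n, ∏ i ∈ range l, coeff (f i) B
      = ∑ c ∈ Finset.Nat.antidiagonalTuple l n, ∏ i, coeff (c i) B := by
    refine Finset.sum_nbij' (i := fun f => fun k : Fin l => f k)
      (j := fun c => Finsupp.onFinset (range l)
        (fun a => if h : a < l then c ⟨a, h⟩ else 0)
        (fun a ha => by by_contra hmem; simp only [Finset.mem_range] at hmem; simp [hmem] at ha))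
      ?_ ?_ ?_ ?_ ?_
    · intro f hf
      rw [Finset.mem_finsuppAntidiag] at hf
      rw [Finset.Nat.mem_antidiagonalTuple]
      rw [← hf.1, Finset.sum_range]
    · intro c hc
      rw [Finset.Nat.mem_antidiagonalTuple] at hc
      rw [Finset.mem_finsuppAntidiag]
      constructor
      · rw [← hc, Finset.sum_range]
        refine Finset.sum_congr rfl fun i _ => ?_
        simp [Finsupp.onFinset_apply, i.2]
      · exact Finsupp.support_onFinset_subset
    · intro f hf
      rw [Finset.mem_finsuppAntidiag] at hf
      ext a
      simp only [Finsupp.onFinset_apply]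
      split
      · rfl
      · rename_i h
        by_contra h0
        have : a ∈ f.support := Finsupp.mem_support_iff.mpr fun hh => h0 hh.symm
        have := hf.2 this
        simp only [Finset.mem_range] at this
        exact h this
    · intro c hc
      funext k
      simp [Finsupp.onFinset_apply, k.2]
    · intro f hf
      rw [Finset.prod_range fun i => coeff (f i) B]
  rw [stepA, compSum]
  rw [← Finset.sum_subset (Finset.filter_subset (fun c => ∀ i, 1 ≤ c i)
      (Finset.Nat.antidiagonalTuple l n))]
  · refine Finset.sum_congr rfl fun c hc => ?_
    rw [Finset.mem_filter] at hc
    refine Finset.prod_congr rfl fun i _ => ?_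
    rw [hBc, if_neg (by have := hc.2 i; omega)]
  · intro c hc hcf
    rw [Finset.mem_filter, not_and] at hcf
    have : ¬ (∀ i, 1 ≤ c i) := hcf hc
    push_neg at this
    obtain ⟨i, hi⟩ := this
    refine Finset.prod_eq_zero (Finset.mem_univ i) ?_
    rw [hBc, if_pos (by omega)]

end SRaux

open SRaux

/-- Formal version of the identity `S_n = ∑_{l≥1} (1/l!) (n−1)_{l−1}
∑_{k₁+⋯+k_l=n} R_{k₁}⋯R_{k_l}`. -/
theorem S_in_terms_of_R (A : PowerSeries ℝ) (R S : ℕ → ℝ)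
    (hA0 : coeff 0 A = 1)
    (hR : ∀ m : ℕ, coeff m A =
      (if m = 0 then 1 else 0) +
        ∑ n ∈ Finset.Icc 1 m, R n * coeff m ((X * A) ^ n))
    (hS : ∀ m : ℕ, ((m : ℝ) + 1) * coeff (m + 1) A =
      coeff m (A * PowerSeries.mk fun n => ((n : ℝ) + 1) * S (n + 1))) :
    ∀ n : ℕ, 1 ≤ n →
      S n = ∑ l ∈ Finset.Icc 1 n,
        (((n - 1).descFactorial (l - 1) : ℝ) / (Nat.factorial l)) * compSum R l n := by
  intro n hn
  set B := PowerSeries.mk fun k => if k = 0 then (0:ℝ) else R k with hBdef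
  set g := 1 + B with hgdef
  set D := PowerSeries.mk fun k => ((k : ℝ) + 1) * S (k + 1) with hDdef
  have hA0' : constantCoeff A = 1 := by rwa [← coeff_zero_eq_constantCoeff]
  have hA0'' : constantCoeff A ≠ 0 := by rw [hA0']; norm_num
  have hAI : A * A⁻¹ = 1 := PowerSeries.mul_inv_cancel A hA0''
  have hgc : ∀ i, coeff i g = if i = 0 then 1 else R i := by
    intro i
    rw [hgdef, map_add, PowerSeries.coeff_one, hBdef, coeff_mk]
    split <;> ring
  -- A = g ∘ (X * A)
  have hAg : pcomp g (X * A) = A := by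
    ext m
    rw [coeff_pcomp, Finset.sum_range_succ', hR m]
    have h0 : coeff 0 g * coeff m ((X * A) ^ 0) = if m = 0 then 1 else 0 := by
      rw [hgc, if_pos rfl, pow_zero, PowerSeries.coeff_one, one_mul]
    rw [h0, add_comm]
    congr 1
    rw [show Finset.Icc 1 m = Finset.Ico 1 (m + 1) from (Finset.Ico_add_one_right_eq_Icc 1 m),
      Finset.sum_Ico_eq_sum_range]
    simp only [Nat.add_sub_cancel]
    refine Finset.sum_congr rfl fun i _ => ?_
    rw [hgc, if_neg (by omega), Nat.add_comm 1 i]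
  -- derivative relation
  have hdAD : d⁄dX ℝ A = A * D := by
    ext m
    rw [PowerSeries.coeff_derivative, ← hS m]
    ring
  -- chain rule
  have hdA2 : d⁄dX ℝ A = pcomp (d⁄dX ℝ g) (X * A) * d⁄dX ℝ (X * A) := by
    conv_lhs => rw [← hAg]
    exact deriv_pcomp A g
  -- apply the key lemma with K = g' * g^(n-1)
  obtain ⟨p, rfl⟩ : ∃ p, n = p + 1 := ⟨n - 1, by omega⟩
  have hk : ∀ k : ℕ, A ^ k * A⁻¹ ^ k = 1 := fun k => by rw [← mul_pow, hAI, one_pow]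
  have hkey := key A hA0' (d⁄dX ℝ g * g ^ p) (p + 1) (by omega)
  have hsimp : (p + 1) - 1 = p := by omega
  rw [hsimp] at hkey
  have hre : pcomp (d⁄dX ℝ g * g ^ p) (X * A) * (d⁄dX ℝ (X * A) * A⁻¹ ^ (p + 1)) = D := by
    rw [pcomp_mul, pcomp_pow, hAg]
    have e1 : pcomp (d⁄dX ℝ g) (X * A) * A ^ p * (d⁄dX ℝ (X * A) * A⁻¹ ^ (p + 1))
        = pcomp (d⁄dX ℝ g) (X * A) * d⁄dX ℝ (X * A) * A⁻¹ := by
      linear_combination (pcomp (d⁄dX ℝ g) (X * A) * d⁄dX ℝ (X * A) * A⁻¹) * hk p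
    rw [e1, ← hdA2, hdAD]
    linear_combination D * hAI
  rw [hre] at hkey
  -- left side: coeff p D = (p+1) * S (p+1)
  have hD : coeff p D = ((p : ℝ) + 1) * S (p + 1) := coeff_mk _ _
  -- right side: coeff p (g' * g^p) = coeff (p+1) (g^(p+1))
  have hdgn : coeff p (d⁄dX ℝ g * g ^ p) = coeff (p + 1) (g ^ (p + 1)) := by
    have hder : d⁄dX ℝ (g ^ (p + 1)) = PowerSeries.C ((p : ℝ) + 1) * (g ^ p * d⁄dX ℝ g) := by
      rw [Derivation.leibniz_pow]
      simp only [smul_eq_mul, nsmul_eq_mul, Nat.add_sub_cancel, Nat.cast_add, Nat.cast_one,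
        map_add, map_natCast, map_one]
    have h1 := congrArg (coeff p) hder
    rw [PowerSeries.coeff_derivative, coeff_C_mul] at h1
    have hp0 : ((p : ℝ) + 1) ≠ 0 := by positivity
    have h2 : coeff (p + 1) (g ^ (p + 1)) = coeff p (g ^ p * d⁄dX ℝ g) := by
      apply mul_left_cancel₀ hp0
      rw [← h1]
      ring
    rw [h2, mul_comm (g ^ p)]
  rw [hD, hdgn] at hkey
  -- binomial expansion
  have hbin : coeff (p + 1) (g ^ (p + 1))
      = ∑ l ∈ Finset.Icc 1 (p + 1), (Nat.choose (p + 1) l : ℝ) * compSum R l (p + 1) := by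
    have hgB : g = B + 1 := by rw [hgdef, add_comm]
    rw [hgB, add_pow, map_sum]
    have hterm : ∀ l ∈ range (p + 2),
        coeff (p + 1) (B ^ l * 1 ^ (p + 1 - l) * ((p + 1).choose l : ℝ⟦X⟧))
          = ((p + 1).choose l : ℝ) * compSum R l (p + 1) := by
      intro l _
      rw [one_pow, mul_one, ← map_natCast (PowerSeries.C (R := ℝ)), PowerSeries.coeff_mul_C,
        coeff_B_pow]
      ring
    rw [Finset.sum_congr rfl hterm]
    have hset : range (p + 2) = insert 0 (Finset.Icc 1 (p + 1)) := by
      ext x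
      simp only [Finset.mem_range, Finset.mem_insert, Finset.mem_Icc]
      omega
    rw [hset, Finset.sum_insert (by simp)]
    have hzero : ((p + 1).choose 0 : ℝ) * compSum R 0 (p + 1) = 0 := by
      rw [compSum]
      have : (Finset.Nat.antidiagonalTuple 0 (p + 1)).filter (fun c => ∀ i, 1 ≤ c i) = ∅ := by
        apply Finset.eq_empty_of_forall_notMem
        intro c hc
        rw [Finset.mem_filter, Finset.Nat.mem_antidiagonalTuple] at hc
        have := hc.1
        simp at this
      rw [this, Finset.sum_empty, mul_zero]
    rw [hzero, zero_add]
  rw [hbin] at hkey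
  -- conclude
  have hp0 : ((p : ℝ) + 1) ≠ 0 := by positivity
  apply mul_left_cancel₀ hp0
  rw [hkey, Finset.mul_sum]
  refine Finset.sum_congr rfl fun l hl => ?_
  rw [Finset.mem_Icc] at hl
  -- ((p+1).choose l : ℝ) = (p+1) * (descFactorial p (l-1) / l!)
  have hnat : p.descFactorial (l - 1) * (p + 1) = (p + 1).choose l * Nat.factorial l := by
    obtain ⟨l', rfl⟩ : ∃ l', l = l' + 1 := ⟨l - 1, by omega⟩
    rw [Nat.add_sub_cancel, Nat.descFactorial_eq_factorial_mul_choose,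
      Nat.factorial_succ]
    have := Nat.add_one_mul_choose_eq p l'
    calc Nat.factorial l' * p.choose l' * (p + 1)
        = (p + 1) * p.choose l' * Nat.factorial l' := by ring
      _ = ((p + 1).choose (l' + 1) * (l' + 1)) * Nat.factorial l' := by rw [this]
      _ = (p + 1).choose (l' + 1) * ((l' + 1) * Nat.factorial l') := by ring
  have hl0 : (Nat.factorial l : ℝ) ≠ 0 := by
    exact_mod_cast Nat.factorial_ne_zero l
  have hnat' : (p.descFactorial (l - 1) : ℝ) * ((p : ℝ) + 1)
      = ((p + 1).choose l : ℝ) * (Nat.factorial l : ℝ) := by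
    exact_mod_cast congrArg (Nat.cast (R := ℝ)) hnat
  rw [hsimp]
  have hc : ((p : ℝ) + 1) * ((p.descFactorial (l - 1) : ℝ) / (Nat.factorial l : ℝ))
      = ((p + 1).choose l : ℝ) := by
    calc ((p : ℝ) + 1) * ((p.descFactorial (l - 1) : ℝ) / (Nat.factorial l : ℝ))
        = ((p.descFactorial (l - 1) : ℝ) * ((p : ℝ) + 1)) / (Nat.factorial l : ℝ) := by ring
      _ = (((p + 1).choose l : ℝ) * (Nat.factorial l : ℝ)) / (Nat.factorial l : ℝ) := by
          rw [hnat']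
      _ = ((p + 1).choose l : ℝ) := mul_div_cancel_right₀ _ hl0
  rw [← hc]
  ring
end

section
/- With the same setup of moments M_n and free cumulants R_n of a formal Cauchy transform, for every n ≥ 1: M_n = ∑_{l≥1} (1/l!) (n)_{l−1} ∑_{k₁+⋯+k_l=n, k_i≥1} R_{k₁}⋯R_{k_l}, where (n)_{l−1} = n(n−1)⋯(n−l+2) is a falling factorial. -/
open Finset PowerSeries

namespace MCAux

noncomputable section

variable (M R : ℕ → ℝ)

def A : ℝ⟦X⟧ := PowerSeries.mk M
def B : ℝ⟦X⟧ := X * A M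
def phi : ℝ⟦X⟧ := PowerSeries.mk (fun n => if n = 0 then (1:ℝ) else R n)
def a (m k : ℕ) : ℝ := coeff m (B M ^ k)
def c (m s : ℕ) : ℝ := coeff s (phi R ^ m)
def E (m k : ℕ) : ℝ := coeff m (B M ^ k * d⁄dX ℝ (B M))

lemma coeff_A (m : ℕ) : coeff m (A M) = M m := coeff_mk m M

lemma coeff_B_succ (m : ℕ) : coeff (m+1) (B M) = M m := by
  rw [B, coeff_succ_X_mul, coeff_A]

lemma coeff_Xmul_pow_eq_zero (f : ℝ⟦X⟧) {m k : ℕ} (h : m < k) :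
    coeff m ((X * f) ^ k) = 0 := by
  rw [mul_pow, coeff_X_pow_mul', if_neg (by omega)]

lemma a_eq_zero {m k : ℕ} (h : m < k) : a M m k = 0 :=
  coeff_Xmul_pow_eq_zero _ h

lemma I1 (m k : ℕ) : ((k:ℝ)+1) * E M m k = ((m:ℝ)+1) * a M (m+1) (k+1) := by
  have hd : d⁄dX ℝ (B M ^ (k+1)) = (k+1) • (B M ^ k * d⁄dX ℝ (B M)) := by
    rw [Derivation.leibniz_pow]
    simp [smul_eq_mul]
  have := congrArg (coeff m) hd
  rw [coeff_derivative, map_nsmul] at this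
  rw [E, a]
  push_cast at this
  rw [nsmul_eq_mul] at this
  push_cast at this
  linarith [this]

lemma E_eq_zero {m k : ℕ} (h : m < k) : E M m k = 0 := by
  rw [E, coeff_mul]
  apply Finset.sum_eq_zero
  rintro ⟨i, j⟩ hp
  have : i + j = m := Finset.HasAntidiagonal.mem_antidiagonal.mp hp
  have hi : i < k := by omega
  have : coeff i (B M ^ k) = 0 := by
    rw [B, mul_pow, coeff_X_pow_mul', if_neg (by omega)]
  rw [this, zero_mul]

lemma sum_shift (f : ℕ → ℝ) (n : ℕ) :
    ∑ j ∈ Icc 1 n, f j = ∑ i ∈ range n, f (i+1) := by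
  induction n with
  | zero => simp
  | succ n ih => rw [Finset.sum_Icc_succ_top (by omega), ih, Finset.sum_range_succ]

lemma coeff_phi (j : ℕ) : coeff j (phi R) = if j = 0 then 1 else R j := coeff_mk _ _

lemma Lc (m s : ℕ) : c R (m+1) s = c R m s + ∑ n ∈ Icc 1 s, R n * c R m (s - n) := by
  have h : phi R ^ (m+1) = phi R * phi R ^ m := by ring
  rw [c, h, coeff_mul, Finset.Nat.sum_antidiagonal_eq_sum_range_succ_mk,
    Finset.sum_range_succ', sum_shift]
  simp only [coeff_phi, Nat.add_one_ne_zero, if_false, if_true, Nat.sub_zero, one_mul]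
  rw [add_comm]
  rfl

lemma Ldphi (m : ℕ) : (m:ℝ) * c R (m+1) m =
    ((m:ℝ)+1) * ∑ j ∈ Icc 1 m, (j:ℝ) * R j * c R m (m - j) := by
  cases m with
  | zero => simp
  | succ t =>
    have hd : d⁄dX ℝ (phi R ^ (t+2)) = (t+2) • (phi R ^ (t+1) * d⁄dX ℝ (phi R)) := by
      rw [Derivation.leibniz_pow]
      simp [smul_eq_mul]
    have h1 := congrArg (coeff t) hd
    rw [coeff_derivative, map_nsmul, nsmul_eq_mul] at h1
    have h2 : coeff t (phi R ^ (t+1) * d⁄dX ℝ (phi R)) =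
        ∑ k ∈ range (t+1), (coeff (k+1) (phi R) * ((k:ℝ)+1)) * coeff (t-k) (phi R ^ (t+1)) := by
      rw [mul_comm, coeff_mul, Finset.Nat.sum_antidiagonal_eq_sum_range_succ_mk]
      apply Finset.sum_congr rfl
      intro k _
      rw [coeff_derivative]
    rw [h2] at h1
    have h3 : ∑ j ∈ Icc 1 (t+1), (j:ℝ) * R j * c R (t+1) ((t+1) - j)
        = ∑ k ∈ range (t+1), (coeff (k+1) (phi R) * ((k:ℝ)+1)) * coeff (t-k) (phi R ^ (t+1)) := by
      rw [sum_shift]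
      apply Finset.sum_congr rfl
      intro k _
      rw [coeff_phi, if_neg (by omega)]
      have : t + 1 - (k + 1) = t - k := by omega
      rw [this, c]
      push_cast
      ring
    rw [h3, c]
    push_cast at h1 ⊢
    linarith [h1]

variable {M R}
variable (hM0 : M 0 = 1)
  (hR : ∀ m : ℕ, coeff m (PowerSeries.mk M) =
      (if m = 0 then 1 else 0) +
        ∑ n ∈ Finset.Icc 1 m, R n * coeff m ((X * PowerSeries.mk M) ^ n))

include hR in
lemma star (C : ℝ⟦X⟧) (m : ℕ) :
    coeff m (C * A M) = coeff m C +
      ∑ n ∈ Icc 1 m, R n * coeff m (C * B M ^ n) := by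
  rw [coeff_mul]
  have key : ∀ p ∈ antidiagonal m,
      coeff p.1 C * coeff p.2 (A M) =
      (if p.2 = 0 then coeff p.1 C else 0) +
        ∑ n ∈ Icc 1 m, R n * (coeff p.1 C * coeff p.2 (B M ^ n)) := by
    intro p hp
    have hp2 : p.1 + p.2 = m := Finset.HasAntidiagonal.mem_antidiagonal.mp hp
    rw [A, hR p.2]
    have hext : ∑ n ∈ Icc 1 p.2, R n * coeff p.2 ((X * PowerSeries.mk M) ^ n)
        = ∑ n ∈ Icc 1 m, R n * coeff p.2 ((X * PowerSeries.mk M) ^ n) := by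
      apply Finset.sum_subset
      · exact Finset.Icc_subset_Icc_right (by omega)
      · intro n hn hn'
        simp only [mem_Icc] at hn hn'
        rw [coeff_Xmul_pow_eq_zero _ (by omega), mul_zero]
    rw [hext, mul_add, Finset.mul_sum]
    congr 1
    · split <;> simp
    · apply Finset.sum_congr rfl
      intro n _
      rw [B, A]
      ring
  rw [Finset.sum_congr rfl key, Finset.sum_add_distrib]
  congr 1
  · rw [Finset.sum_eq_single (m, 0)]
    · simp
    · rintro ⟨p1, p2⟩ hp hne
      have h1 : p1 + p2 = m := Finset.HasAntidiagonal.mem_antidiagonal.mp hp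
      have h2 : p2 ≠ 0 := by
        rintro rfl
        refine hne ?_
        have : p1 = m := by omega
        rw [this]
      simp [h2]
    · intro h
      exact absurd (Finset.HasAntidiagonal.mem_antidiagonal.mpr (by simp)) h
  · rw [Finset.sum_comm]
    apply Finset.sum_congr rfl
    intro n _
    rw [coeff_mul, Finset.mul_sum]

include hR in
lemma aF1 (m : ℕ) : a M (m+1) 1 =
    (if m = 0 then 1 else 0) + ∑ j ∈ Icc 1 m, R j * a M m j := by
  have h : a M (m+1) 1 = coeff m (PowerSeries.mk M) := by
    rw [a, pow_one, B, A, coeff_succ_X_mul]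
  rw [h, hR m]
  congr 1

include hR in
lemma LE4 (m k : ℕ) :
    E M (m+1) (k+1) = E M m k + ∑ n ∈ Icc 1 m, R n * E M m (k+n) := by
  have hB : B M = X * A M := rfl
  have h : B M ^ (k+1) * d⁄dX ℝ (B M) = X * ((B M ^ k * d⁄dX ℝ (B M)) * A M) := by
    have h0 : B M ^ (k+1) * d⁄dX ℝ (B M) = (B M ^ k * d⁄dX ℝ (B M)) * B M := by ring
    rw [h0, hB]
    ring
  rw [E, h, coeff_succ_X_mul, star hR]
  congr 1
  apply Finset.sum_congr rfl
  intro n _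
  congr 1
  rw [E]
  congr 1
  rw [pow_add]
  ring

include hM0 hR in
lemma keyP : ∀ m k : ℕ, k ≤ m → E M m k = c R (m+1) (m - k) := by
  intro m
  induction m with
  | zero =>
    intro k hk
    interval_cases k
    have h1 : E M 0 0 = M 0 := by
      rw [E, pow_zero, one_mul, show (0:ℕ) = 0 + 0 from rfl, coeff_derivative, coeff_B_succ]
      simp
    rw [h1, hM0, c, pow_one, Nat.sub_zero, coeff_phi]
    simp
  | succ m ih =>
    intro k hk
    cases k with
    | succ k' =>
      have hk' : k' ≤ m := by omega
      have hms : m + 1 - (k' + 1) = m - k' := by omega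
      rw [LE4 hR, hms, Lc]
      congr 1
      · exact ih k' hk'
      have hsub : Icc 1 (m - k') ⊆ Icc 1 m := Finset.Icc_subset_Icc_right (by omega)
      have h2 : ∑ n ∈ Icc 1 m, R n * E M m (k'+n)
          = ∑ n ∈ Icc 1 (m-k'), R n * E M m (k'+n) := by
        symm
        apply Finset.sum_subset hsub
        intro n hn hn'
        simp only [mem_Icc] at hn hn'
        rw [E_eq_zero M (show m < k' + n by omega), mul_zero]
      rw [h2]
      apply Finset.sum_congr rfl
      intro n hn
      simp only [mem_Icc] at hn
      rw [ih (k' + n) (by omega), show m - (k' + n) = m - k' - n by omega]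
    | zero =>
      -- hard case
      have h1 := I1 M (m+1) 0
      have h2 := aF1 hR (m+1)
      rw [if_neg (Nat.succ_ne_zero m), zero_add] at h2
      -- Step A
      have hA : ∀ j ∈ Icc 1 (m+1),
          ((m:ℝ)+1) * (R j * a M (m+1) j) = (j:ℝ) * R j * c R (m+1) (m+1-j) := by
        intro j hj
        simp only [mem_Icc] at hj
        obtain ⟨j', rfl⟩ : ∃ j', j = j' + 1 := ⟨j - 1, by omega⟩
        have hI := I1 M m j'
        rw [ih j' (by omega)] at hI
        have hcast : ((j'+1 : ℕ) : ℝ) = (j' : ℝ) + 1 := by push_cast; ring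
        have hsub : m + 1 - (j' + 1) = m - j' := by omega
        rw [hcast, hsub]
        calc ((m:ℝ)+1) * (R (j'+1) * a M (m+1) (j'+1))
            = R (j'+1) * (((m:ℝ)+1) * a M (m+1) (j'+1)) := by ring
          _ = R (j'+1) * (((j':ℝ)+1) * c R (m+1) (m - j')) := by rw [← hI]
          _ = ((j':ℝ)+1) * R (j'+1) * c R (m+1) (m - j') := by ring
      -- Step B
      have hB : ((m:ℝ)+1) * a M (m+2) 1
          = ∑ j ∈ Icc 1 (m+1), (j:ℝ) * R j * c R (m+1) (m+1-j) := by
        rw [h2, Finset.mul_sum]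
        exact Finset.sum_congr rfl hA
      -- Step C
      have hC := Ldphi R (m+1)
      push_cast at hC
      -- Step D
      have hD : E M (m+1) 0 = ((m:ℝ)+2) * a M (m+2) 1 := by
        push_cast at h1
        linarith [h1]
      have hfin : ((m:ℝ)+1) * E M (m+1) 0 = ((m:ℝ)+1) * c R (m+2) (m+1) := by
        rw [hD]
        nlinarith [hB, hC]
      have hne : ((m:ℝ)+1) ≠ 0 := by positivity
      have := mul_left_cancel₀ hne hfin
      rw [this, Nat.sub_zero]

end
end MCAux

lemma coeff_pow_tuple (f : ℝ⟦X⟧) (l n : ℕ) :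
    coeff n (f ^ l) = ∑ t ∈ Finset.Nat.antidiagonalTuple l n, ∏ i, coeff (t i) f := by
  induction l generalizing n with
  | zero =>
    cases n with
    | zero => simp [Finset.Nat.antidiagonalTuple_zero_zero]
    | succ n => simp [Finset.Nat.antidiagonalTuple_zero_succ]
  | succ l ih =>
    rw [pow_succ, mul_comm, coeff_mul]
    have h1 : ∀ p ∈ antidiagonal n, coeff p.1 f * coeff p.2 (f ^ l)
        = ∑ t ∈ Finset.Nat.antidiagonalTuple l p.2, coeff p.1 f * ∏ i, coeff (t i) f := by
      intro p _
      rw [ih, Finset.mul_sum]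
    rw [Finset.sum_congr rfl h1, Finset.sum_sigma']
    apply Finset.sum_nbij' (fun x => Fin.cons x.1.1 x.2)
      (fun t => (⟨(t 0, n - t 0), Fin.tail t⟩ :
        (p : ℕ × ℕ) × (Fin l → ℕ)))
    · rintro ⟨⟨p1, p2⟩, t⟩ hx
      simp only [Finset.mem_sigma, Finset.HasAntidiagonal.mem_antidiagonal,
        Finset.Nat.mem_antidiagonalTuple] at hx
      rw [Finset.Nat.mem_antidiagonalTuple, Fin.sum_cons, hx.2]
      exact hx.1
    · intro t ht
      rw [Finset.Nat.mem_antidiagonalTuple] at ht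
      have hsum : t 0 + ∑ i, Fin.tail t i = n := by
        rw [← ht, Fin.sum_univ_succ]; rfl
      simp only [Finset.mem_sigma, Finset.HasAntidiagonal.mem_antidiagonal,
        Finset.Nat.mem_antidiagonalTuple]
      constructor
      · omega
      · omega
    · rintro ⟨⟨p1, p2⟩, t⟩ hx
      simp only [Finset.mem_sigma, Finset.HasAntidiagonal.mem_antidiagonal,
        Finset.Nat.mem_antidiagonalTuple] at hx
      have h0 : Fin.cons (α := fun _ => ℕ) p1 t 0 = p1 := rfl
      simp only [Fin.tail_cons, h0]
      rw [show n - p1 = p2 by omega]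
    · intro t _
      simp only [Fin.cons_self_tail]
    · rintro ⟨⟨p1, p2⟩, t⟩ _
      rw [Fin.prod_univ_succ]
      simp only [Fin.cons_zero, Fin.cons_succ]

/-- The free moment-cumulant formula in closed summation form:
`M_n = ∑_{l≥1} (1/l!) (n)_{l−1} ∑_{k₁+⋯+k_l=n, kᵢ≥1} R_{k₁}⋯R_{k_l}`. Here
`A(w) = ∑_{n≥0} M_n wⁿ` (so that `G(z) = ∑ M_n z^{-(n+1)}` with `w = 1/z`), `M₀ = 1`,
and the free cumulants `R_n` are encoded by the compositional inverse relation
`A = 1 + ∑_{n≥1} R_n (w·A)^n`, i.e. `G(R(z) + 1/z) = z`. -/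
theorem moment_cumulant_formula (M R : ℕ → ℝ)
    (hM0 : M 0 = 1)
    (hR : ∀ m : ℕ, coeff m (PowerSeries.mk M) =
      (if m = 0 then 1 else 0) +
        ∑ n ∈ Finset.Icc 1 m, R n * coeff m ((X * PowerSeries.mk M) ^ n)) :
    ∀ n : ℕ, 1 ≤ n →
      M n = ∑ l ∈ Finset.Icc 1 n,
        ((n.descFactorial (l - 1) : ℝ) / (Nat.factorial l)) * compSum R l n := by
  intro n hn
  -- Step 1: (n+1) * M n = c R (n+1) n
  have hMn : MCAux.a M (n+1) 1 = M n := by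
    rw [MCAux.a, pow_one, MCAux.coeff_B_succ]
  have h1 := MCAux.I1 M n 0
  have h2 := MCAux.keyP hM0 hR n 0 (Nat.zero_le n)
  rw [Nat.sub_zero] at h2
  have hc : ((n:ℝ)+1) * M n = MCAux.c R (n+1) n := by
    rw [← hMn, ← h2]
    push_cast at h1 ⊢
    linarith [h1]
  -- Step 2: expand c R (n+1) n binomially
  set ψ : ℝ⟦X⟧ := PowerSeries.mk (fun j => if j = 0 then (0:ℝ) else R j) with hψ
  have h_phi : MCAux.phi R = 1 + ψ := by
    ext k
    rw [MCAux.coeff_phi, map_add, hψ, coeff_mk, coeff_one]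
    cases k <;> simp
  have hψX : ψ = X * PowerSeries.mk (fun j => R (j+1)) := by
    ext k
    cases k with
    | zero => simp [hψ]
    | succ k => rw [hψ, coeff_mk, coeff_succ_X_mul, coeff_mk]; simp
  have hcoeffψ : ∀ l : ℕ, coeff n (ψ ^ l) = compSum R l n := by
    intro l
    rw [coeff_pow_tuple, compSum]
    have hcond : ∀ t ∈ Finset.Nat.antidiagonalTuple l n,
        (∏ i, coeff (t i) ψ) ≠ 0 → ∀ i, 1 ≤ t i := by
      intro t _ hne i
      by_contra hlt
      apply hne
      apply Finset.prod_eq_zero (Finset.mem_univ i)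
      rw [hψ, coeff_mk, if_pos (by omega)]
    rw [← Finset.sum_filter_of_ne hcond]
    apply Finset.sum_congr rfl
    intro t ht
    obtain ⟨ht1, ht2⟩ := Finset.mem_filter.mp ht
    apply Finset.prod_congr rfl
    intro i _
    rw [hψ, coeff_mk, if_neg (by have := ht2 i; omega)]
  have hsum : MCAux.c R (n+1) n
      = ∑ l ∈ range (n+2), (Nat.choose (n+1) l : ℝ) * compSum R l n := by
    rw [MCAux.c, h_phi, add_comm (1:ℝ⟦X⟧) ψ, add_pow, map_sum]
    apply Finset.sum_congr rfl
    intro l _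
    rw [one_pow, mul_one, ← map_natCast (PowerSeries.C (R := ℝ)) ((n+1).choose l),
      PowerSeries.coeff_mul_C, hcoeffψ]
    ring
  -- Step 3: restrict the sum to Icc 1 n
  have hrestrict : ∑ l ∈ range (n+2), (Nat.choose (n+1) l : ℝ) * compSum R l n
      = ∑ l ∈ Icc 1 n, (Nat.choose (n+1) l : ℝ) * compSum R l n := by
    symm
    apply Finset.sum_subset
    · intro l hl
      simp only [mem_Icc] at hl
      simp only [Finset.mem_range]
      omega
    · intro l hl hl'
      simp only [Finset.mem_range] at hl
      simp only [mem_Icc] at hl'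
      have hl0 : l = 0 ∨ l = n + 1 := by omega
      rcases hl0 with rfl | rfl
      · rw [← hcoeffψ 0, pow_zero, coeff_one, if_neg (by omega), mul_zero]
      · rw [← hcoeffψ (n+1), hψX, MCAux.coeff_Xmul_pow_eq_zero _ (by omega), mul_zero]
  -- Step 4: coefficient identity
  have hterm : ∀ l ∈ Icc 1 n, (Nat.choose (n+1) l : ℝ) / ((n:ℝ)+1)
      = (n.descFactorial (l - 1) : ℝ) / (Nat.factorial l) := by
    intro l hl
    simp only [mem_Icc] at hl
    have hnat : (n+1) * n.descFactorial (l-1) = Nat.factorial l * Nat.choose (n+1) l := by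
      have h' : (n+1).descFactorial ((l-1)+1) = (n+1) * n.descFactorial (l-1) :=
        Nat.succ_descFactorial_succ n (l-1)
      rw [show (l-1)+1 = l by omega] at h'
      rw [← h', Nat.descFactorial_eq_factorial_mul_choose]
    have hne1 : ((n:ℝ)+1) ≠ 0 := by positivity
    have hne2 : (Nat.factorial l : ℝ) ≠ 0 := by
      exact_mod_cast Nat.factorial_ne_zero l
    field_simp
    have := congrArg (fun x : ℕ => (x : ℝ)) hnat
    push_cast at this
    linarith [this]
  -- Finish
  have hMn' : M n = (∑ l ∈ Icc 1 n, (Nat.choose (n+1) l : ℝ) * compSum R l n) / ((n:ℝ)+1) := by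
    rw [← hrestrict, ← hsum, ← hc]
    field_simp
  rw [hMn', Finset.sum_div]
  apply Finset.sum_congr rfl
  intro l hl
  rw [mul_comm, mul_div_assoc, hterm l hl, mul_comm]
end

section
/- Let G(z) be the formal power series G = 1/z + ∑_{n≥1} M_n z^{-(n+1)} whose coefficients M_n are polynomials in variables R₁, R₂, … determined by the inverse relation G(R(z)+1/z) = z with R(z) = ∑ R_k z^{k-1}. Then for any k ≥ 1, ∂G/∂R_k = −(1/k)·d/dz[(G(z))^k] = −G(z)^{k−1} G'(z), as an identity of formal power series in 1/z with polynomial coefficients in the R_i. -/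
open Finset PowerSeries

/-- Ground ring: polynomials in the free cumulants `R₁, R₂, …` (variable `n` is `Rₙ`). -/
abbrev RRing : Type := MvPolynomial ℕ ℚ

/-- Formal derivative `d/dw` of a power series in `w` (where `w = 1/z`). -/
noncomputable def Dw (f : PowerSeries RRing) : PowerSeries RRing :=
  PowerSeries.mk fun m => ((m : RRing) + 1) * coeff (m + 1) f

/-- The derivative `d/dz` expressed in the variable `w = 1/z`: `d/dz = -w² d/dw`. -/
noncomputable def Dz (f : PowerSeries RRing) : PowerSeries RRing :=
  -(X ^ 2 * Dw f)

/-- Coefficientwise partial derivative `∂/∂R_k` of a power series whose coefficients are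
polynomials in the `R_i`. -/
noncomputable def pdR (k : ℕ) (f : PowerSeries RRing) : PowerSeries RRing :=
  PowerSeries.mk fun m => MvPolynomial.pderiv k (coeff m f)

/-! ### Auxiliary lemmas -/

lemma coeff_pdR (k m : ℕ) (f : PowerSeries RRing) :
    coeff m (pdR k f) = MvPolynomial.pderiv k (coeff m f) :=
  coeff_mk _ _

lemma coeff_natCast_mul (n m : ℕ) (f : PowerSeries RRing) :
    coeff m (((n : PowerSeries RRing) + 1) * f) = ((n : RRing) + 1) * coeff m f := by
  have h : ((n : PowerSeries RRing) + 1) = PowerSeries.C ((n : RRing) + 1) := by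
    rw [map_add, map_one, map_natCast]
  rw [h, coeff_C_mul]

lemma pdR_mul (k : ℕ) (f g : PowerSeries RRing) :
    pdR k (f * g) = pdR k f * g + f * pdR k g := by
  refine PowerSeries.ext fun m => ?_
  simp only [pdR, coeff_mk, map_add, coeff_mul, map_sum, MvPolynomial.pderiv_mul]
  rw [← Finset.sum_add_distrib]

lemma pdR_X (k : ℕ) : pdR k (X : PowerSeries RRing) = 0 := by
  refine PowerSeries.ext fun m => ?_
  simp only [pdR, coeff_mk, coeff_X, map_zero]
  split_ifs <;> simp

lemma pdR_pow (k n : ℕ) (f : PowerSeries RRing) :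
    pdR k (f ^ (n + 1)) = ((n : PowerSeries RRing) + 1) * (f ^ n * pdR k f) := by
  induction n with
  | zero => simp [pow_one]
  | succ n ih =>
    rw [pow_succ, pdR_mul, ih]
    push_cast
    ring

lemma Dw_eq (f : PowerSeries RRing) : Dw f = PowerSeries.derivative RRing f := by
  refine PowerSeries.ext fun m => ?_
  rw [Dw, coeff_mk, PowerSeries.coeff_derivative]
  ring

lemma Dw_mul (f g : PowerSeries RRing) : Dw (f * g) = Dw f * g + f * Dw g := by
  simp only [Dw_eq, Derivation.leibniz, smul_eq_mul]
  ring

lemma Dw_X : Dw (X : PowerSeries RRing) = 1 := by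
  rw [Dw_eq, PowerSeries.derivative_X]

lemma Dw_pow (n : ℕ) (f : PowerSeries RRing) :
    Dw (f ^ (n + 1)) = ((n : PowerSeries RRing) + 1) * (f ^ n * Dw f) := by
  induction n with
  | zero => simp [pow_one]
  | succ n ih =>
    rw [pow_succ, Dw_mul, ih]
    push_cast
    ring

lemma coeff_G_pow_eq_zero (A : PowerSeries RRing) {m n : ℕ} (h : m < n) :
    coeff m ((X * A) ^ n) = 0 := by
  rw [mul_pow, coeff_X_pow_mul', if_neg (by omega)]

lemma coeff_Gm_mul (A f : PowerSeries RRing) (hf : coeff 0 f = 0) (m : ℕ) :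
    coeff m ((X * A) ^ m * f) = 0 := by
  rw [mul_pow, mul_assoc, coeff_X_pow_mul', if_pos le_rfl, Nat.sub_self]
  rw [PowerSeries.coeff_zero_eq_constantCoeff, map_mul]
  rw [PowerSeries.coeff_zero_eq_constantCoeff] at hf
  rw [hf, mul_zero]

/-- The series `P = ∑_{n ≥ 1} n Rₙ Gⁿ⁻¹` (coefficientwise finite sum). -/
noncomputable def Pser (G : PowerSeries RRing) : PowerSeries RRing :=
  PowerSeries.mk fun m => ∑ n ∈ Finset.Icc 1 (m + 1),
    (n : RRing) * MvPolynomial.X n * coeff m (G ^ (n - 1))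

lemma coeff_P_mul (A f : PowerSeries RRing) (m : ℕ) :
    coeff m (Pser (X * A) * f) =
      ∑ n ∈ Finset.Icc 1 (m + 1),
        (n : RRing) * MvPolynomial.X n * coeff m ((X * A) ^ (n - 1) * f) := by
  rw [coeff_mul]
  have h1 : ∀ p ∈ antidiagonal m,
      coeff p.1 (Pser (X * A)) * coeff p.2 f
        = ∑ n ∈ Finset.Icc 1 (m + 1),
            (n : RRing) * MvPolynomial.X n * coeff p.1 ((X * A) ^ (n - 1))
              * coeff p.2 f := by
    intro p hp
    rw [Pser, coeff_mk, Finset.sum_mul]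
    apply Finset.sum_subset
    · apply Finset.Icc_subset_Icc_right
      have := Finset.HasAntidiagonal.antidiagonal.fst_le hp
      omega
    · intro n hn hn2
      simp only [Finset.mem_Icc] at hn hn2
      have : coeff p.1 ((X * A) ^ (n - 1)) = 0 :=
        coeff_G_pow_eq_zero A (by omega)
      rw [this, mul_zero, zero_mul]
  rw [Finset.sum_congr rfl h1, Finset.sum_comm]
  refine Finset.sum_congr rfl fun n _ => ?_
  rw [coeff_mul, Finset.mul_sum]
  exact Finset.sum_congr rfl fun p _ => by ring

/-- Functional equation for `T = ∂G/∂R_k`: `T = X·Gᵏ + X·(P·T)`. -/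
lemma eq1 (A : PowerSeries RRing)
    (hA : ∀ m : ℕ, coeff m A =
      (if m = 0 then 1 else 0) +
        ∑ n ∈ Finset.Icc 1 m, MvPolynomial.X n * coeff m ((X * A) ^ n))
    (k : ℕ) (hk : 1 ≤ k) :
    pdR k (X * A) = X * (X * A) ^ k + X * (Pser (X * A) * pdR k (X * A)) := by
  have hT0 : coeff 0 (pdR k (X * A)) = 0 := by
    rw [coeff_pdR, coeff_zero_X_mul, map_zero]
  refine PowerSeries.ext fun m => ?_
  cases m with
  | zero =>
    rw [hT0, map_add, coeff_zero_X_mul, coeff_zero_X_mul, add_zero]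
  | succ m =>
    rw [map_add, coeff_succ_X_mul, coeff_succ_X_mul, coeff_P_mul, coeff_pdR,
      coeff_succ_X_mul, hA m, map_add, map_sum]
    have h0 : MvPolynomial.pderiv k ((if m = 0 then (1 : RRing) else 0)) = 0 := by
      split_ifs <;> simp
    rw [h0, zero_add]
    have hterm : ∀ n ∈ Finset.Icc 1 m,
        MvPolynomial.pderiv k (MvPolynomial.X n * coeff m ((X * A) ^ n))
          = (if k = n then coeff m ((X * A) ^ k) else 0)
            + (n : RRing) * MvPolynomial.X n
                * coeff m ((X * A) ^ (n - 1) * pdR k (X * A)) := by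
      intro n hn
      simp only [Finset.mem_Icc] at hn
      obtain ⟨i, rfl⟩ : ∃ i, n = i + 1 := ⟨n - 1, by omega⟩
      rw [MvPolynomial.pderiv_mul, MvPolynomial.pderiv_X]
      congr 1
      · rcases eq_or_ne k (i + 1) with h | h
        · subst h; simp
        · rw [Pi.single_eq_of_ne (Ne.symm h), if_neg h, zero_mul]
      · rw [← coeff_pdR, pdR_pow, coeff_natCast_mul, Nat.add_sub_cancel]
        push_cast
        ring
    rw [Finset.sum_congr rfl hterm, Finset.sum_add_distrib]
    have hsum1 : (∑ n ∈ Finset.Icc 1 m,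
        (if k = n then coeff m ((X * A) ^ k) else 0)) = coeff m ((X * A) ^ k) := by
      rw [Finset.sum_ite_eq]
      split_ifs with h
      · rfl
      · simp only [Finset.mem_Icc] at h
        exact (coeff_G_pow_eq_zero A (by omega)).symm
    have hsum2 : (∑ n ∈ Finset.Icc 1 m,
          (n : RRing) * MvPolynomial.X n * coeff m ((X * A) ^ (n - 1) * pdR k (X * A)))
        = ∑ n ∈ Finset.Icc 1 (m + 1),
            (n : RRing) * MvPolynomial.X n
              * coeff m ((X * A) ^ (n - 1) * pdR k (X * A)) := by
      apply Finset.sum_subset (Finset.Icc_subset_Icc_right (by omega))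
      intro n hn hn2
      simp only [Finset.mem_Icc] at hn hn2
      obtain rfl : n = m + 1 := by omega
      rw [show m + 1 - 1 = m from rfl, coeff_Gm_mul A _ hT0, mul_zero]
    rw [hsum1, hsum2]

/-- Functional equation for `D = dG/dw`: `D = A + X·(P·D)`. -/
lemma eq2 (A : PowerSeries RRing)
    (hA : ∀ m : ℕ, coeff m A =
      (if m = 0 then 1 else 0) +
        ∑ n ∈ Finset.Icc 1 m, MvPolynomial.X n * coeff m ((X * A) ^ n)) :
    Dw (X * A) = A + X * (Pser (X * A) * Dw (X * A)) := by
  have hDwA : Dw A = Pser (X * A) * Dw (X * A) := by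
    refine PowerSeries.ext fun m => ?_
    rw [coeff_P_mul, Dw, coeff_mk, hA (m + 1)]
    simp only [Nat.succ_ne_zero, if_false, zero_add]
    rw [Finset.mul_sum]
    refine Finset.sum_congr rfl fun n hn => ?_
    simp only [Finset.mem_Icc] at hn
    obtain ⟨i, rfl⟩ : ∃ i, n = i + 1 := ⟨n - 1, by omega⟩
    have h2 : ((m : RRing) + 1) * coeff (m + 1) ((X * A) ^ (i + 1))
        = coeff m (Dw ((X * A) ^ (i + 1))) := by
      rw [Dw, coeff_mk]
    rw [mul_left_comm, h2, Dw_pow, coeff_natCast_mul, Nat.add_sub_cancel]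
    push_cast
    ring
  conv_lhs => rw [Dw_mul, Dw_X, one_mul, hDwA]

/-- Let `G(z) = w·A(w)` (with `w = 1/z`) be the formal power series whose coefficients are
the universal polynomials in `R₁, R₂, …` determined by the compositional inverse relation
`G(R(z)+1/z) = z`, i.e. `A = 1 + ∑_{n≥1} Rₙ (w·A)ⁿ`. Then for any `k ≥ 1`
`∂G/∂R_k = −(1/k)·d/dz[(G(z))^k] = −G^{k−1}·G'`, as an identity of formal power series in
`w = 1/z` with coefficients polynomial in the `R_i`. -/
theorem partial_G_partial_Rk (A : PowerSeries RRing)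
    (hA : ∀ m : ℕ, coeff m A =
      (if m = 0 then 1 else 0) +
        ∑ n ∈ Finset.Icc 1 m, MvPolynomial.X n * coeff m ((X * A) ^ n))
    (k : ℕ) (hk : 1 ≤ k) :
    pdR k (X * A) = -(((1 : ℚ) / k) • Dz ((X * A) ^ k)) ∧
    pdR k (X * A) = -((X * A) ^ (k - 1) * Dz (X * A)) := by
  obtain ⟨j, rfl⟩ : ∃ j, k = j + 1 := ⟨k - 1, by omega⟩
  have h1 : pdR (j + 1) (X * A) * (1 - X * Pser (X * A)) = X * (X * A) ^ (j + 1) := by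
    linear_combination eq1 A hA (j + 1) (by omega)
  have h2 : Dw (X * A) * (1 - X * Pser (X * A)) = A := by
    linear_combination eq2 A hA
  have hu : IsUnit (1 - X * Pser (X * A)) := by
    rw [PowerSeries.isUnit_iff_constantCoeff]
    simp
  have hmul : (1 - X * Pser (X * A)) * pdR (j + 1) (X * A)
      = (1 - X * Pser (X * A)) * (X ^ 2 * (X * A) ^ j * Dw (X * A)) := by
    rw [mul_comm (1 - X * Pser (X * A)) (pdR (j + 1) (X * A)), h1]
    calc X * (X * A) ^ (j + 1) = X ^ 2 * (X * A) ^ j * A := by rw [pow_succ]; ring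
      _ = X ^ 2 * (X * A) ^ j * (Dw (X * A) * (1 - X * Pser (X * A))) := by rw [h2]
      _ = (1 - X * Pser (X * A)) * (X ^ 2 * (X * A) ^ j * Dw (X * A)) := by ring
  have hkey : pdR (j + 1) (X * A) = X ^ 2 * (X * A) ^ j * Dw (X * A) :=
    hu.mul_left_cancel hmul
  constructor
  · rw [Dz, Dw_pow, smul_neg, neg_neg]
    have hre : (X : PowerSeries RRing) ^ 2
          * (((j : PowerSeries RRing) + 1) * ((X * A) ^ j * Dw (X * A)))
        = ((j + 1 : ℕ) : PowerSeries RRing) * (X ^ 2 * (X * A) ^ j * Dw (X * A)) := by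
      push_cast
      ring
    rw [hre, ← map_natCast (algebraMap ℚ (PowerSeries RRing)) (j + 1), ← Algebra.smul_def,
      smul_smul]
    have hq : (1 : ℚ) / ((j + 1 : ℕ) : ℚ) * ((j + 1 : ℕ) : ℚ) = 1 := by
      rw [one_div, inv_mul_cancel₀]
      push_cast
      positivity
    rw [hq, one_smul, hkey]
  · rw [hkey, Nat.add_sub_cancel, Dz]
    ring
end

section
/- In the free moment-cumulant setting, the mixed derivative of the n-th moment satisfies: for k₁,…,k_l ≥ 1 with k_l arbitrary, (∂^l M_n/∂R_{k₁}⋯∂R_{k_l}) evaluated at R₁=R₂=⋯=0 equals (n)_{l−1} if n = k₁+⋯+k_l, and 0 otherwise, where (n)_{l−1} is a falling factorial. Equivalently, the coefficient of R_{k₁}⋯R_{k_l} (as a monomial, counted with multiplicity of orderings) in M_n depends only on l and on k₁+⋯+k_l. -/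
open Finset PowerSeries

namespace MDMaux


/-- coefficient of a partial derivative -/
lemma coeff_pderiv {σ : Type*} [DecidableEq σ] (x : σ) (d : σ →₀ ℕ)
    (q : MvPolynomial σ ℚ) :
    MvPolynomial.coeff d (MvPolynomial.pderiv x q)
      = (d x + 1) * MvPolynomial.coeff (d + Finsupp.single x 1) q := by
  induction q using MvPolynomial.induction_on' with
  | monomial v c =>
    rw [MvPolynomial.pderiv_monomial, MvPolynomial.coeff_monomial,
      MvPolynomial.coeff_monomial]
    by_cases hvx : v x = 0
    · have h1 : v - Finsupp.single x 1 = v := by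
        ext a
        rw [Finsupp.tsub_apply, Finsupp.single_apply]
        by_cases hax : x = a
        · subst hax; omega
        · simp [hax]
      have h2 : v ≠ d + Finsupp.single x 1 := by
        intro h
        have := DFunLike.congr_fun h x
        simp [Finsupp.single_apply, hvx] at this
      rw [h1, if_neg h2, hvx]
      simp
    · have hle : Finsupp.single x 1 ≤ v := by
        rw [Finsupp.single_le_iff]; omega
      have hiff : v - Finsupp.single x 1 = d ↔ v = d + Finsupp.single x 1 :=
        tsub_eq_iff_eq_add_of_le hle
      by_cases hv : v = d + Finsupp.single x 1
      · rw [if_pos (hiff.mpr hv), if_pos hv]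
        have : v x = d x + 1 := by
          rw [hv]; simp [Finsupp.single_apply]
        rw [this]; push_cast; ring
      · rw [if_neg (fun h => hv (hiff.mp h)), if_neg hv, mul_zero]
  | add p q hp hq =>
    rw [map_add, MvPolynomial.coeff_add, hp, hq, MvPolynomial.coeff_add]
    ring

/-- the exponent finsupp attached to a list of variables -/
noncomputable def uL {σ : Type*} [DecidableEq σ] (L : List σ) : σ →₀ ℕ :=
  (L.map fun i => Finsupp.single i 1).sum

lemma uL_nil {σ : Type*} [DecidableEq σ] : uL ([] : List σ) = 0 := rfl

lemma uL_cons {σ : Type*} [DecidableEq σ] (i : σ) (L : List σ) :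
    uL (i :: L) = Finsupp.single i 1 + uL L := by
  simp [uL]

lemma uL_apply {σ : Type*} [DecidableEq σ] (L : List σ) (a : σ) :
    uL L a = L.count a := by
  induction L with
  | nil => simp [uL]
  | cons i L ih =>
    rw [uL_cons, Finsupp.add_apply, ih, Finsupp.single_apply, List.count_cons]
    by_cases h : i = a
    · subst h; simp [Nat.add_comm]
    · simp [h, fun hh : a = i => h hh.symm]

lemma eval_zero_eq_coeff_zero {σ : Type*} (q : MvPolynomial σ ℚ) :
    MvPolynomial.eval (fun _ => (0 : ℚ)) q = MvPolynomial.coeff 0 q := by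
  induction q using MvPolynomial.induction_on with
  | C a => simp
  | add p q hp hq =>
    rw [map_add, MvPolynomial.coeff_add, hp, hq]
  | mul_X p j hp =>
    classical
    rw [map_mul, MvPolynomial.eval_X, mul_zero, MvPolynomial.coeff_mul_X']
    simp

lemma fold_pderiv_eval_zero {σ : Type*} [DecidableEq σ] (L : List σ) (hL : L.Nodup) :
    ∀ q : MvPolynomial σ ℚ,
      MvPolynomial.eval (fun _ => (0 : ℚ))
        (L.foldl (fun p j => MvPolynomial.pderiv j p) q)
      = MvPolynomial.coeff (uL L) q := by
  induction L with
  | nil => intro q; simpa [uL_nil] using eval_zero_eq_coeff_zero q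
  | cons i L ih =>
    intro q
    have hnd := List.nodup_cons.mp hL
    rw [List.foldl_cons, ih hnd.2, coeff_pderiv]
    have hnot : uL L i = 0 := by
      rw [uL_apply, List.count_eq_zero]
      exact hnd.1
    rw [hnot, uL_cons, add_comm (Finsupp.single i 1) (uL L)]
    ring



/-- the substitution `X j ↦ ∑_{i : kk i = j} ε_i` -/
noncomputable def phi {l : ℕ} (kk : Fin l → ℕ) : RRing →+* MvPolynomial (Fin l) ℚ :=
  (MvPolynomial.aeval fun j =>
    ∑ i ∈ Finset.univ.filter (fun i' => kk i' = j), MvPolynomial.X i).toRingHom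

lemma phi_X {l : ℕ} (kk : Fin l → ℕ) (j : ℕ) :
    phi kk (MvPolynomial.X j)
      = ∑ i ∈ Finset.univ.filter (fun i' => kk i' = j), MvPolynomial.X i := by
  simp [phi]

lemma phi_pderiv {l : ℕ} (kk : Fin l → ℕ) (i : Fin l) (P : RRing) :
    MvPolynomial.pderiv i (phi kk P) = phi kk (MvPolynomial.pderiv (kk i) P) := by
  induction P using MvPolynomial.induction_on with
  | C a => simp [phi]
  | add p q hp hq => rw [map_add, map_add, map_add, hp, hq, map_add]
  | mul_X p j hp =>
    rw [map_mul, MvPolynomial.pderiv_mul, hp, phi_X]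
    have h1 : MvPolynomial.pderiv i
        (∑ i' ∈ Finset.univ.filter (fun i' => kk i' = j), (MvPolynomial.X i' : MvPolynomial (Fin l) ℚ))
        = if kk i = j then 1 else 0 := by
      rw [map_sum]
      rw [Finset.sum_congr rfl (fun x _ => MvPolynomial.pderiv_X i x)]
      classical
      rw [Finset.sum_pi_single']
      simp [Finset.mem_filter]
    rw [h1, MvPolynomial.pderiv_mul, MvPolynomial.pderiv_X, map_add, map_mul, map_mul, phi_X]
    have h2 : phi kk (Pi.single (M := fun _ => RRing) (kk i) 1 j) = if kk i = j then 1 else 0 := by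
      by_cases h : kk i = j
      · subst h; simp
      · rw [Pi.single_apply, if_neg (fun hh => h hh.symm), if_neg h, map_zero]
    rw [h2]

lemma phi_foldl {l : ℕ} (kk : Fin l → ℕ) (L : List (Fin l)) :
    ∀ P : RRing,
      phi kk (L.foldl (fun p i => MvPolynomial.pderiv (kk i) p) P)
        = L.foldl (fun q i => MvPolynomial.pderiv i q) (phi kk P) := by
  induction L with
  | nil => intro P; rfl
  | cons i L ih =>
    intro P
    rw [List.foldl_cons, List.foldl_cons, ih, phi_pderiv]

lemma eval_zero_phi {l : ℕ} (kk : Fin l → ℕ) (P : RRing) :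
    MvPolynomial.eval (fun _ => (0 : ℚ)) (phi kk P)
      = MvPolynomial.eval (fun _ => (0 : ℚ)) P := by
  induction P using MvPolynomial.induction_on with
  | C a => simp [phi]
  | add p q hp hq => rw [map_add, map_add, hp, hq, map_add]
  | mul_X p j hp =>
    rw [map_mul, map_mul, hp, phi_X, map_sum]
    simp

section Abar

variable {l : ℕ} (kk : Fin l → ℕ) (A : PowerSeries RRing)

lemma Abar_eq (hkk : ∀ i, 1 ≤ kk i)
    (hA : ∀ m : ℕ, coeff (R := RRing) m A =
      (if m = 0 then 1 else 0) +
        ∑ n ∈ Finset.Icc 1 m, MvPolynomial.X n * coeff (R := RRing) m ((X * A) ^ n)) :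
    PowerSeries.map (phi kk) A
      = 1 + ∑ i : Fin l, PowerSeries.C (R := MvPolynomial (Fin l) ℚ) (MvPolynomial.X i)
          * (X ^ kk i * (PowerSeries.map (phi kk) A) ^ kk i) := by
  classical
  apply PowerSeries.ext
  intro m
  set Ab := PowerSeries.map (phi kk) A with hAb
  set g : Fin l → MvPolynomial (Fin l) ℚ :=
    fun i => MvPolynomial.X i * coeff m (X ^ kk i * Ab ^ kk i) with hg
  have lhs_eq : coeff m Ab
      = (if m = 0 then 1 else 0) + ∑ j ∈ Finset.Icc 1 m,
          ∑ i ∈ Finset.univ.filter (fun i' => kk i' = j),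
            (MvPolynomial.X i * coeff m ((X * Ab) ^ j)) := by
    rw [hAb, PowerSeries.coeff_map, hA m, map_add, map_sum]
    congr 1
    · by_cases h : m = 0 <;> simp [h]
    · refine Finset.sum_congr rfl fun j _ => ?_
      rw [map_mul, phi_X, Finset.sum_mul]
      refine Finset.sum_congr rfl fun i _ => ?_
      congr 1
      rw [← PowerSeries.coeff_map, map_pow, map_mul, PowerSeries.map_X]
  have inner_eq : ∀ j ∈ Finset.Icc 1 m,
      ∑ i ∈ Finset.univ.filter (fun i' => kk i' = j),
        (MvPolynomial.X i * coeff m ((X * Ab) ^ j))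
      = ∑ i ∈ Finset.univ.filter (fun i' => kk i' = j), g i := by
    intro j _
    refine Finset.sum_congr rfl fun i hi => ?_
    have hki : kk i = j := (Finset.mem_filter.mp hi).2
    rw [hg, ← hki, mul_pow]
  have fib := Finset.sum_fiberwise_eq_sum_filter Finset.univ (Finset.Icc 1 m) kk g
  have ext_eq : ∑ i ∈ Finset.univ.filter (fun i' => kk i' ∈ Finset.Icc 1 m), g i
      = ∑ i ∈ Finset.univ, g i := by
    refine Finset.sum_subset (Finset.filter_subset _ _) fun i _ hi => ?_
    have : ¬ kk i ≤ m := by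
      intro hle
      exact hi (Finset.mem_filter.mpr ⟨Finset.mem_univ i,
        Finset.mem_Icc.mpr ⟨hkk i, hle⟩⟩)
    show MvPolynomial.X i * coeff m (X ^ kk i * Ab ^ kk i) = 0
    rw [PowerSeries.coeff_X_pow_mul', if_neg this, mul_zero]
  have rhs_eq : coeff m (1 + ∑ i : Fin l,
      PowerSeries.C (R := MvPolynomial (Fin l) ℚ) (MvPolynomial.X i)
        * (X ^ kk i * Ab ^ kk i))
      = (if m = 0 then 1 else 0) + ∑ i ∈ Finset.univ, g i := by
    rw [map_add, map_sum, PowerSeries.coeff_one]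
    congr 1
    exact Finset.sum_congr rfl fun i _ => PowerSeries.coeff_C_mul m _ _
  rw [lhs_eq, Finset.sum_congr rfl inner_eq, fib, ext_eq, ← rhs_eq]

lemma Abar_pow_succ (hkk : ∀ i, 1 ≤ kk i)
    (hA : ∀ m : ℕ, coeff (R := RRing) m A =
      (if m = 0 then 1 else 0) +
        ∑ n ∈ Finset.Icc 1 m, MvPolynomial.X n * coeff (R := RRing) m ((X * A) ^ n))
    (p : ℕ) :
    (PowerSeries.map (phi kk) A) ^ (p + 1)
      = (PowerSeries.map (phi kk) A) ^ p
        + ∑ i : Fin l, PowerSeries.C (R := MvPolynomial (Fin l) ℚ) (MvPolynomial.X i)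
            * (X ^ kk i * (PowerSeries.map (phi kk) A) ^ (kk i + p)) := by
  set Ab := PowerSeries.map (phi kk) A with hAb
  have h1 : Ab ^ (p + 1) = Ab ^ p * (1 + ∑ i : Fin l,
      PowerSeries.C (R := MvPolynomial (Fin l) ℚ) (MvPolynomial.X i)
        * (X ^ kk i * Ab ^ kk i)) := by
    rw [← Abar_eq kk A hkk hA, pow_succ]
  rw [h1, mul_add, mul_one, Finset.mul_sum]
  refine congrArg (HAdd.hAdd (Ab ^ p)) ?_
  refine Finset.sum_congr rfl fun i _ => ?_
  rw [pow_add]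
  ring

end Abar
/-- squarefree exponent of a finset -/
noncomputable def uT {l : ℕ} (T : Finset (Fin l)) : Fin l →₀ ℕ :=
  ∑ i ∈ T, Finsupp.single i 1

lemma uT_apply {l : ℕ} (T : Finset (Fin l)) (a : Fin l) :
    uT T a = if a ∈ T then 1 else 0 := by
  classical
  rw [uT, Finsupp.finset_sum_apply]
  rw [Finset.sum_congr rfl (fun i _ => Finsupp.single_apply)]
  exact Finset.sum_ite_eq' T a (fun _ => 1)

lemma uT_empty {l : ℕ} : uT (∅ : Finset (Fin l)) = 0 := by simp [uT]

lemma uT_ne_zero {l : ℕ} {T : Finset (Fin l)} (hT : T.Nonempty) : uT T ≠ 0 := by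
  obtain ⟨a, ha⟩ := hT
  intro h
  have := uT_apply T a
  rw [h, if_pos ha] at this
  simp at this

lemma uT_sub_single {l : ℕ} {T : Finset (Fin l)} {i : Fin l} (hi : i ∈ T) :
    uT T - Finsupp.single i 1 = uT (T.erase i) := by
  have h : uT T = Finsupp.single i 1 + uT (T.erase i) := by
    rw [uT, uT, ← Finset.add_sum_erase _ _ hi]
  rw [h, add_tsub_cancel_left]

lemma mem_uT_support {l : ℕ} {T : Finset (Fin l)} {i : Fin l} (hi : i ∈ T) :
    i ∈ (uT T).support := by
  rw [Finsupp.mem_support_iff, uT_apply, if_pos hi]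
  exact one_ne_zero

lemma not_mem_uT_support {l : ℕ} {T : Finset (Fin l)} {i : Fin l} (hi : i ∉ T) :
    i ∉ (uT T).support := by
  rw [Finsupp.mem_support_iff, uT_apply, if_neg hi]
  simp

/-- weight of a finset -/
def Wt {l : ℕ} (kk : Fin l → ℕ) (T : Finset (Fin l)) : ℕ := ∑ i ∈ T, kk i

/-- target value -/
noncomputable def cval {l : ℕ} (kk : Fin l → ℕ) (T : Finset (Fin l)) (p : ℕ) : ℚ :=
  if T = ∅ then 1
  else (p : ℚ) * ((Wt kk T + p - 1).descFactorial (T.card - 1) : ℚ)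

section Main

variable {l : ℕ} (kk : Fin l → ℕ) (A : PowerSeries RRing)

-- statement of Abar_pow_succ assumed available (proved in part3); restate as hypothesis here
lemma main_induction (hkk : ∀ i, 1 ≤ kk i)
    (hpow : ∀ p : ℕ, (PowerSeries.map (phi kk) A) ^ (p + 1)
      = (PowerSeries.map (phi kk) A) ^ p
        + ∑ i : Fin l, PowerSeries.C (R := MvPolynomial (Fin l) ℚ) (MvPolynomial.X i)
            * (X ^ kk i * (PowerSeries.map (phi kk) A) ^ (kk i + p))) :
    ∀ (t : ℕ) (T : Finset (Fin l)), T.card = t → ∀ (p m : ℕ),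
      MvPolynomial.coeff (uT T)
          (coeff (R := MvPolynomial (Fin l) ℚ) m ((PowerSeries.map (phi kk) A) ^ p))
        = if m = Wt kk T then cval kk T p else 0 := by
  classical
  intro t
  induction t using Nat.strong_induction_on with
  | _ t ih =>
  intro T hT p
  induction p with
  | zero =>
    intro m
    rw [pow_zero, PowerSeries.coeff_one, apply_ite (MvPolynomial.coeff (uT T)),
      MvPolynomial.coeff_one, MvPolynomial.coeff_zero]
    by_cases hT0 : T = ∅
    · subst hT0
      simp [uT_empty, Wt, cval]
    · have hne := uT_ne_zero (Finset.nonempty_iff_ne_empty.mpr hT0)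
      have hc : cval kk T 0 = 0 := by
        rw [cval, if_neg hT0]
        simp
      have h1 : (if (0 : Fin l →₀ ℕ) = uT T then (1 : ℚ) else 0) = 0 :=
        if_neg (fun h => hne h.symm)
      rw [hc, h1]
      simp
  | succ p ihp =>
    intro m
    rw [hpow p, map_add, map_sum, MvPolynomial.coeff_add, MvPolynomial.coeff_sum, ihp m]
    have hterm : ∀ i : Fin l,
        MvPolynomial.coeff (uT T)
          (coeff (R := MvPolynomial (Fin l) ℚ) m
            (PowerSeries.C (R := MvPolynomial (Fin l) ℚ) (MvPolynomial.X i)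
              * (X ^ kk i * (PowerSeries.map (phi kk) A) ^ (kk i + p))))
        = if i ∈ T ∧ kk i ≤ m ∧ m - kk i = Wt kk (T.erase i)
            then cval kk (T.erase i) (kk i + p) else 0 := by
      intro i
      rw [PowerSeries.coeff_C_mul, mul_comm (MvPolynomial.X i), MvPolynomial.coeff_mul_X']
      by_cases hiT : i ∈ T
      · rw [if_pos (mem_uT_support hiT), uT_sub_single hiT,
          PowerSeries.coeff_X_pow_mul', apply_ite (MvPolynomial.coeff (uT (T.erase i))),
          MvPolynomial.coeff_zero]
        by_cases hkm : kk i ≤ m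
        · rw [if_pos hkm]
          have hlt : (T.erase i).card < t := by
            rw [← hT]
            exact Finset.card_erase_lt_of_mem hiT
          rw [ih _ hlt (T.erase i) rfl (kk i + p) (m - kk i)]
          by_cases hw : m - kk i = Wt kk (T.erase i)
          · rw [if_pos hw, if_pos ⟨hiT, hkm, hw⟩]
          · rw [if_neg hw, if_neg (by tauto)]
        · rw [if_neg hkm, if_neg (by tauto)]
      · rw [if_neg (not_mem_uT_support hiT), if_neg (by tauto)]
    rw [Finset.sum_congr rfl (fun i _ => hterm i)]
    by_cases hm : m = Wt kk T
    · subst hm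
      rw [if_pos rfl, if_pos rfl]
      by_cases hT0 : T = ∅
      · subst hT0
        rw [Finset.sum_eq_zero (fun i _ => by
          rw [if_neg]; rintro ⟨h, -⟩; exact absurd h (Finset.notMem_empty i))]
        rw [cval, if_pos rfl, cval, if_pos rfl, add_zero]
      · -- T nonempty
        have hsum : (∑ i : Fin l, if i ∈ T ∧ kk i ≤ Wt kk T
              ∧ Wt kk T - kk i = Wt kk (T.erase i)
            then cval kk (T.erase i) (kk i + p) else 0)
            = ∑ i ∈ T, cval kk (T.erase i) (kk i + p) := by
          rw [← Finset.sum_subset (Finset.subset_univ T) (fun i _ hi => by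
            rw [if_neg]; rintro ⟨h, -⟩; exact hi h)]
          refine Finset.sum_congr rfl fun i hi => ?_
          have hadd : kk i + Wt kk (T.erase i) = Wt kk T := Finset.add_sum_erase T kk hi
          exact if_pos ⟨hi, by omega, by omega⟩
        rw [hsum]
        -- now pure numerics
        have hcard1 : 1 ≤ T.card :=
          Finset.card_pos.mpr (Finset.nonempty_iff_ne_empty.mpr hT0)
        have hwge : T.card ≤ Wt kk T := by
          rw [Wt, Finset.card_eq_sum_ones]
          exact Finset.sum_le_sum fun i _ => hkk i
        by_cases ht1 : T.card = 1
        · obtain ⟨i0, rfl⟩ := Finset.card_eq_one.mp ht1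
          rw [Finset.sum_singleton, Finset.erase_singleton]
          have e1 : cval kk (∅ : Finset (Fin l)) (kk i0 + p) = 1 := by
            rw [cval, if_pos rfl]
          have e2 : ∀ q : ℕ, cval kk {i0} q = q := by
            intro q
            rw [cval, if_neg (Finset.singleton_ne_empty i0), Finset.card_singleton]
            simp [Nat.descFactorial_zero]
          rw [e1, e2, e2]
          push_cast
          ring
        · have ht2 : 2 ≤ T.card := by omega
          set w := Wt kk T with hwdef
          set s := T.card - 2 with hsdef
          have hc1 : T.card - 1 = s + 1 := by omega
          have hDval : ∀ i ∈ T, cval kk (T.erase i) (kk i + p)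
              = ((kk i + p : ℕ) : ℚ) * ((w + p - 1).descFactorial s : ℚ) := by
            intro i hi
            have herase_ne : T.erase i ≠ ∅ := by
              intro h
              have := Finset.card_erase_of_mem hi
              rw [h, Finset.card_empty] at this
              omega
            rw [cval, if_neg herase_ne]
            have hadd : kk i + Wt kk (T.erase i) = Wt kk T := Finset.add_sum_erase T kk hi
            have h1 : Wt kk (T.erase i) + (kk i + p) - 1 = w + p - 1 := by omega
            have h2 : (T.erase i).card - 1 = s := by
              rw [Finset.card_erase_of_mem hi]; omega
            rw [h1, h2]
          rw [Finset.sum_congr rfl hDval]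
          rw [← Finset.sum_mul]
          have hsum2 : (∑ i ∈ T, ((kk i + p : ℕ) : ℚ)) = (w : ℚ) + (T.card : ℚ) * p := by
            push_cast
            rw [Finset.sum_add_distrib, Finset.sum_const, nsmul_eq_mul]
            rw [hwdef, Wt]
            push_cast
            ring
          rw [hsum2]
          -- cval values
          rw [cval, if_neg hT0, cval, if_neg hT0, hc1]
          have hd1 : (w + p - 1).descFactorial (s + 1)
              = (w + p - 1 - s) * (w + p - 1).descFactorial s :=
            Nat.descFactorial_succ _ _
          have hwp : w + (p + 1) - 1 = (w + p - 1) + 1 := by omega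
          have hd2 : (w + (p + 1) - 1).descFactorial (s + 1)
              = (w + p) * (w + p - 1).descFactorial s := by
            rw [hwp, Nat.succ_descFactorial_succ]
            congr 1
            omega
          rw [hd1, hd2]
          have hcast : ((w + p - 1 - s : ℕ) : ℚ) = (w : ℚ) + p - 1 - s := by
            have : s ≤ w + p - 1 := by omega
            push_cast [Nat.cast_sub this]
            have : 1 ≤ w + p := by omega
            push_cast [Nat.cast_sub this]
            ring
          have htc : (T.card : ℚ) = (s : ℚ) + 2 := by
            have : T.card = s + 2 := by omega
            rw [this]; push_cast; ring
          push_cast [hcast, htc]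
          ring
    · rw [if_neg hm, if_neg hm, zero_add]
      refine Finset.sum_eq_zero fun i _ => ?_
      rw [if_neg]
      rintro ⟨hiT, hkm, hw⟩
      apply hm
      have : kk i + Wt kk (T.erase i) = Wt kk T := Finset.add_sum_erase T kk hiT
      omega

end Main

lemma uL_finRange (l : ℕ) : uL (List.finRange l) = uT (Finset.univ : Finset (Fin l)) := by
  ext a
  rw [uL_apply, uT_apply, if_pos (Finset.mem_univ a)]
  exact List.count_eq_one_of_mem (List.nodup_finRange l) (List.mem_finRange a)

end MDMaux

/-- Let `A(w) = ∑ M_n wⁿ` be the formal power series whose coefficient `M_n` is the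
universal polynomial in `R₁, R₂, …` given by the free moment-cumulant relation
`A = 1 + ∑_{n≥1} Rₙ (w·A)ⁿ` (equivalently, `M_n = ∑_{Π ∈ NC(n)} ∏_{b∈Π} R_{|b|}`).
Then for `k₁, …, k_l ≥ 1`, the mixed derivative `∂^l M_n / ∂R_{k₁} ⋯ ∂R_{k_l}` evaluated
at `R₁ = R₂ = ⋯ = 0` equals the falling factorial `(n)_{l−1}` if `n = k₁ + ⋯ + k_l`,
and `0` otherwise. -/
theorem mixed_derivative_of_moment (A : PowerSeries RRing)
    (hA : ∀ m : ℕ, coeff (R := RRing) m A =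
      (if m = 0 then 1 else 0) +
        ∑ n ∈ Finset.Icc 1 m, MvPolynomial.X n * coeff (R := RRing) m ((X * A) ^ n))
    (n l : ℕ) (hl : 1 ≤ l) (kk : Fin l → ℕ) (hkk : ∀ i, 1 ≤ kk i) :
    MvPolynomial.eval (fun _ => (0 : ℚ))
        ((List.ofFn kk).foldl (fun p j => MvPolynomial.pderiv j p) (coeff (R := RRing) n A))
      = if (∑ i, kk i) = n then (n.descFactorial (l - 1) : ℚ) else 0 := by
  classical
  open MDMaux in
  have step1 :
      MvPolynomial.eval (fun _ => (0 : ℚ))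
        ((List.ofFn kk).foldl (fun p j => MvPolynomial.pderiv j p) (coeff (R := RRing) n A))
      = MvPolynomial.coeff (uT (Finset.univ : Finset (Fin l)))
          (coeff (R := MvPolynomial (Fin l) ℚ) n (PowerSeries.map (phi kk) A)) := by
    rw [← eval_zero_phi kk, List.ofFn_eq_map, List.foldl_map, phi_foldl kk,
      fold_pderiv_eval_zero _ (List.nodup_finRange l), uL_finRange, PowerSeries.coeff_map]
  have main := main_induction kk A hkk (Abar_pow_succ kk A hkk hA)
    (Finset.univ : Finset (Fin l)).card Finset.univ rfl 1 n
  rw [pow_one] at main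
  rw [step1, main]
  have hW : Wt kk (Finset.univ : Finset (Fin l)) = ∑ i, kk i := rfl
  have hne : (Finset.univ : Finset (Fin l)) ≠ ∅ := by
    have : Nonempty (Fin l) := ⟨⟨0, hl⟩⟩
    exact Finset.univ_nonempty.ne_empty
  by_cases hc : (∑ i, kk i) = n
  · rw [if_pos (by rw [hW]; exact hc.symm), if_pos hc]
    rw [cval, if_neg hne, hW, hc]
    have h1 : n + 1 - 1 = n := by omega
    have h2 : (Finset.univ : Finset (Fin l)).card - 1 = l - 1 := by
      rw [Finset.card_univ, Fintype.card_fin]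
    rw [h1, h2]
    push_cast
    ring
  · rw [if_neg (by rw [hW]; exact fun h => hc h.symm), if_neg hc]
end
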